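/- arXiv:1411.0522 — 6 statements merged into one kernel-verified Lean document; each statement's English description precedes it below -/
import Mathlib

section
/- If a simple connected graph G does not contain K_{1,k} as a minor, then G has a set X of at most 4k vertices such that G−X is a vertex-disjoint union of paths. -/
open scoped Classical

/-- A multigraph: possibly parallel edges and loops, given by source/target maps
(the orientation is irrelevant; walks may traverse edges in either direction). -/
structure Multigraph (V : Type*) (E : Type*) where
  src : E → V
  tgt : E → V

namespace Multigraph

variable {V E V' E' : Type*}

/-- Walks in a multigraph, traversing edges in either direction. -/
inductive Walk (G : Multigraph V E) : V → V → Type _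
  | nil (v : V) : Walk G v v
  | cons {u v w : V} (e : E) (hs : G.src e = u) (ht : G.tgt e = v) (p : Walk G v w) : Walk G u w
  | cons' {u v w : V} (e : E) (hs : G.src e = v) (ht : G.tgt e = u) (p : Walk G v w) : Walk G u w

def Walk.edges {G : Multigraph V E} : ∀ {u v : V}, G.Walk u v → List E
  | _, _, .nil _ => []
  | _, _, .cons e _ _ p => e :: p.edges
  | _, _, .cons' e _ _ p => e :: p.edges

def Walk.support {G : Multigraph V E} : ∀ {u v : V}, G.Walk u v → List V
  | u, _, .nil _ => [u]
  | u, _, .cons _ _ _ p => u :: p.support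
  | u, _, .cons' _ _ _ p => u :: p.support

/-- An edge is incident with a vertex. -/
def Inc (G : Multigraph V E) (e : E) (v : V) : Prop := G.src e = v ∨ G.tgt e = v

/-- The end of an edge other than `v`. -/
noncomputable def otherEnd (G : Multigraph V E) (v : V) (e : E) : V :=
  if G.src e = v then G.tgt e else G.src e

lemma otherEnd_ne (G : Multigraph V E) {v : V} {e : E} (hinc : G.Inc e v)
    (hnl : ¬ (G.src e = v ∧ G.tgt e = v)) : G.otherEnd v e ≠ v := by
  unfold otherEnd
  split_ifs with h
  · exact fun ht => hnl ⟨h, ht⟩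
  · exact fun hs => (hinc.elim h (fun ht => h (by
      exact absurd hs (fun hs' => h hs')))) |>.elim
  
/-- Degree of a vertex (each loop counts twice). -/
noncomputable def degree (G : Multigraph V E) (v : V) : ℕ :=
  Set.ncard {e | G.src e = v} + Set.ncard {e | G.tgt e = v}

/-- The edge cut determined by a vertex set `S`: edges with exactly one end in `S`. -/
def cutEdges (G : Multigraph V E) (S : Set V) : Set E :=
  {e | (G.src e ∈ S ∧ G.tgt e ∉ S) ∨ (G.src e ∉ S ∧ G.tgt e ∈ S)}

/-- A set `W` is `k`-edge-connected in `G`: no edge cut of size `< k` separates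
two vertices of `W`. -/
def EdgeConnSet (G : Multigraph V E) (k : ℕ) (W : Set V) : Prop :=
  ∀ S : Set V, (G.cutEdges S).ncard < k → ∀ x ∈ W, ∀ y ∈ W, (x ∈ S ↔ y ∈ S)

/-- There exist `k` pairwise edge-disjoint paths (trails) from `u` to `v`. -/
def EDWalks (G : Multigraph V E) (u v : V) (k : ℕ) : Prop :=
  ∃ P : Fin k → G.Walk u v, (∀ i, (P i).edges.Nodup) ∧
    ∀ i j, i ≠ j → ∀ e ∈ (P i).edges, e ∉ (P j).edges

/-- The neighbourhood of `v`: vertices other than `v` joined to `v` by an edge. -/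
def nbhd (G : Multigraph V E) (v : V) : Set V :=
  {u | u ≠ v ∧ ∃ e, (G.src e = v ∧ G.tgt e = u) ∨ (G.src e = u ∧ G.tgt e = v)}

/-- A strong immersion of `H` in `G`. -/
structure StrongImm (H : Multigraph V' E') (G : Multigraph V E) where
  vmap : V' → V
  vinj : Function.Injective vmap
  path : ∀ e : E', G.Walk (vmap (H.src e)) (vmap (H.tgt e))
  edges_nodup : ∀ e, (path e).edges.Nodup
  edisj : ∀ e f, e ≠ f → ∀ x ∈ (path e).edges, x ∉ (path f).edges
  avoid : ∀ (e : E') (u : V'), u ≠ H.src e → u ≠ H.tgt e → vmap u ∉ (path e).support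

def StrongImmersion (H : Multigraph V' E') (G : Multigraph V E) : Prop :=
  Nonempty (StrongImm H G)

/-- A weak immersion of `H` in `G`. -/
structure WeakImm (H : Multigraph V' E') (G : Multigraph V E) where
  vmap : V' → V
  vinj : Function.Injective vmap
  path : ∀ e : E', G.Walk (vmap (H.src e)) (vmap (H.tgt e))
  edges_nodup : ∀ e, (path e).edges.Nodup
  edisj : ∀ e f, e ≠ f → ∀ x ∈ (path e).edges, x ∉ (path f).edges

def WeakImmersion (H : Multigraph V' E') (G : Multigraph V E) : Prop :=
  Nonempty (WeakImm H G)

/-- The complete graph `K n` as a multigraph. -/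
def completeMG (n : ℕ) : Multigraph (Fin n) {p : Fin n × Fin n // p.1 < p.2} :=
  ⟨fun p => p.1.1, fun p => p.1.2⟩

/-- A path-like decomposition of the part of `G` induced on `S`, with respect to
an ordered set `X ⊆ S`: an ordering of `X` and a near-partition of `S \ X` into bags. -/
structure PathLikeDecomp (G : Multigraph V E) (S : Set V) (X : Set V) where
  t : ℕ
  ord : Fin t → V
  ord_inj : Function.Injective ord
  ord_range : Set.range ord = X
  bag : Fin (t + 1) → Set V
  bag_disj : ∀ i j, i ≠ j → Disjoint (bag i) (bag j)
  bag_union : (⋃ i, bag i) = S \ X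

namespace PathLikeDecomp

variable {G : Multigraph V E} {S X : Set V} (P : PathLikeDecomp G S X)

/-- Vertices strictly to the left of the `i`-th ordered vertex. -/
def leftSet (i : Fin P.t) : Set V :=
  {v | ∃ j, j < i ∧ v = P.ord j} ∪ ⋃ (j : Fin (P.t + 1)) (_ : (j : ℕ) ≤ (i : ℕ)), P.bag j

/-- Vertices strictly to the right of the `i`-th ordered vertex. -/
def rightSet (i : Fin P.t) : Set V :=
  {v | ∃ j, i < j ∧ v = P.ord j} ∪ ⋃ (j : Fin (P.t + 1)) (_ : (i : ℕ) < (j : ℕ)), P.bag j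

/-- The `x_i`-cut of the decomposition. -/
def cutAt (i : Fin P.t) : Set E :=
  {e | (G.src e ∈ P.leftSet i ∧ G.tgt e ∈ P.rightSet i) ∨
       (G.src e ∈ P.rightSet i ∧ G.tgt e ∈ P.leftSet i)}

/-- The decomposition has width less than `w`. -/
def WidthLt (w : ℕ) : Prop := ∀ i, (P.cutAt i).ncard < w

/-- A set `Z` is `p`-bounded in the decomposition. -/
def Bounded (p : ℕ) (Z : Set V) : Prop :=
  (X ∩ Z).ncard + Set.ncard {j : Fin (P.t + 1) | (P.bag j ∩ Z).Nonempty} ≤ p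

end PathLikeDecomp

/-- `W` is `(a,w,p)`-linear in `G`. -/
def Linear (G : Multigraph V E) (W : Set V) (a w p : ℕ) : Prop :=
  ∃ A : Set V, A ⊆ W ∧ A.ncard ≤ a ∧
    ∃ P : PathLikeDecomp G {v | v ∉ A} (W \ A), P.WidthLt w ∧
      ∀ v ∈ A, P.Bounded p (G.nbhd v)

/-- A graph is `α`-basic if the set of its vertices of degree at least `α` is `α`-linear. -/
def Basic (G : Multigraph V E) (α : ℕ) : Prop :=
  Linear G {v | α ≤ G.degree v} α α α

/-- A tree-cut decomposition of `G` indexed by a tree on `τ`. -/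
structure TreeCutDecomp (G : Multigraph V E) (τ : Type*) where
  tree : SimpleGraph τ
  tree_isTree : tree.IsTree
  bag : τ → Set V
  bag_disj : ∀ i j, i ≠ j → Disjoint (bag i) (bag j)
  bag_union : (⋃ i, bag i) = Set.univ

namespace TreeCutDecomp

variable {τ : Type*} {G : Multigraph V E} (D : TreeCutDecomp G τ)

/-- The union of the bags on the `v`-side of the tree edge `uv`. -/
def sideVerts (u v : τ) : Set V :=
  ⋃ (x : τ) (_ : (D.tree.deleteEdges {s(u, v)}).Reachable v x), D.bag x

/-- The edge cut of `G` determined by the tree edge `uv`. -/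
def edgeCut (u v : τ) : Set E := G.cutEdges (D.sideVerts u v)

/-- The adhesion of the decomposition. -/
noncomputable def adhesion : ℕ :=
  sSup {n | ∃ u v, D.tree.Adj u v ∧ n = (D.edgeCut u v).ncard}

/-- The decomposition has adhesion less than `α`. -/
def AdhesionLt (α : ℕ) : Prop := ∀ u v, D.tree.Adj u v → (D.edgeCut u v).ncard < α

lemma exists_bag (v : V) : ∃ t, v ∈ D.bag t :=
  Set.mem_iUnion.mp (D.bag_union.symm ▸ Set.mem_univ v)

/-- The tree node whose bag contains `v`. -/
noncomputable def nodeOf (v : V) : τ := (D.exists_bag v).choose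

lemma nodeOf_mem (v : V) : v ∈ D.bag (D.nodeOf v) := (D.exists_bag v).choose_spec

/-- Connected components of the tree with node `t` removed. -/
def PeriphComp (t : τ) := (D.tree.induce {x : τ | x ≠ t}).ConnectedComponent

/-- Vertices of the torso at `t`: core vertices and peripheral vertices. -/
def TorsoV (t : τ) := {v : V // v ∈ D.bag t} ⊕ D.PeriphComp t

/-- The consolidation map onto the torso at `t`. -/
noncomputable def torsoProj (t : τ) (v : V) : D.TorsoV t :=
  if h : v ∈ D.bag t then Sum.inl ⟨v, h⟩
  else Sum.inr ((D.tree.induce {x : τ | x ≠ t}).connectedComponentMk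
    ⟨D.nodeOf v, fun he => h (he ▸ D.nodeOf_mem v)⟩)

/-- Edges of the torso at `t`: all edges except the loops created by consolidation. -/
def TorsoE (t : τ) :=
  {e : E // ∀ c : D.PeriphComp t,
    ¬ (D.torsoProj t (G.src e) = Sum.inr c ∧ D.torsoProj t (G.tgt e) = Sum.inr c)}

/-- The torso of the tree-cut decomposition at `t`. -/
noncomputable def torso (t : τ) : Multigraph (D.TorsoV t) (D.TorsoE t) :=
  ⟨fun e => D.torsoProj t (G.src e.1), fun e => D.torsoProj t (G.tgt e.1)⟩

end TreeCutDecomp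

/-- A witness that `G` is a `k`-edge sum of `G₁` and `G₂`. -/
structure EdgeSumWitness (G : Multigraph V E) {V₁ E₁ V₂ E₂ : Type*}
    (G₁ : Multigraph V₁ E₁) (G₂ : Multigraph V₂ E₂) (k : ℕ) where
  v₁ : V₁
  v₂ : V₂
  noloop₁ : ∀ e, ¬ (G₁.src e = v₁ ∧ G₁.tgt e = v₁)
  noloop₂ : ∀ e, ¬ (G₂.src e = v₂ ∧ G₂.tgt e = v₂)
  deg₁ : G₁.degree v₁ = k
  deg₂ : G₂.degree v₂ = k
  π : {e : E₁ // G₁.Inc e v₁} ≃ {e : E₂ // G₂.Inc e v₂}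
  φ : V ≃ ({x : V₁ // x ≠ v₁} ⊕ {x : V₂ // x ≠ v₂})
  ψ : E ≃ ({e : E₁ // ¬ G₁.Inc e v₁} ⊕ {e : E₂ // ¬ G₂.Inc e v₂} ⊕ {e : E₁ // G₁.Inc e v₁})
  ends₁ : ∀ (e : E) (e₁ : {e : E₁ // ¬ G₁.Inc e v₁}), ψ e = Sum.inl e₁ →
    s(G.src e, G.tgt e) =
      s(φ.symm (Sum.inl ⟨G₁.src e₁.1, fun h => e₁.2 (Or.inl h)⟩),
        φ.symm (Sum.inl ⟨G₁.tgt e₁.1, fun h => e₁.2 (Or.inr h)⟩))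
  ends₂ : ∀ (e : E) (e₂ : {e : E₂ // ¬ G₂.Inc e v₂}), ψ e = Sum.inr (Sum.inl e₂) →
    s(G.src e, G.tgt e) =
      s(φ.symm (Sum.inr ⟨G₂.src e₂.1, fun h => e₂.2 (Or.inl h)⟩),
        φ.symm (Sum.inr ⟨G₂.tgt e₂.1, fun h => e₂.2 (Or.inr h)⟩))
  ends_cross : ∀ (e : E) (e₁ : {e : E₁ // G₁.Inc e v₁}), ψ e = Sum.inr (Sum.inr e₁) →
    s(G.src e, G.tgt e) =
      s(φ.symm (Sum.inl ⟨G₁.otherEnd v₁ e₁.1, G₁.otherEnd_ne e₁.2 (noloop₁ e₁.1)⟩),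
        φ.symm (Sum.inr ⟨G₂.otherEnd v₂ (π e₁).1, G₂.otherEnd_ne (π e₁).2 (noloop₂ (π e₁).1)⟩))

/-- `G` is a `k`-edge sum of `G₁` and `G₂`. -/
def IsEdgeSum (G : Multigraph V E) {V₁ E₁ V₂ E₂ : Type*}
    (G₁ : Multigraph V₁ E₁) (G₂ : Multigraph V₂ E₂) (k : ℕ) : Prop :=
  Nonempty (EdgeSumWitness G G₁ G₂ k)

/-- A witness of an edge sum is grounded. -/
def EdgeSumWitness.Grounded {V₁ E₁ V₂ E₂ : Type*} {G : Multigraph V E}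
    {G₁ : Multigraph V₁ E₁} {G₂ : Multigraph V₂ E₂} {k : ℕ}
    (wit : EdgeSumWitness G G₁ G₂ k) : Prop :=
  (∃ v₁' : V₁, v₁' ≠ wit.v₁ ∧ G₁.EDWalks wit.v₁ v₁' k) ∧
  (∃ v₂' : V₂, v₂' ≠ wit.v₂ ∧ G₂.EDWalks wit.v₂ v₂' k)

/-- The graph obtained from `G` by consolidating the set `S` to a single vertex. -/
noncomputable def consolidate (G : Multigraph V E) (S : Set V) :
    Multigraph ({v : V // v ∉ S} ⊕ Unit) {e : E // ¬ (G.src e ∈ S ∧ G.tgt e ∈ S)} where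
  src := fun e => if h : G.src e.1 ∈ S then Sum.inr () else Sum.inl ⟨G.src e.1, h⟩
  tgt := fun e => if h : G.tgt e.1 ∈ S then Sum.inr () else Sum.inl ⟨G.tgt e.1, h⟩

/-- The auxiliary adjacency: `m` pairwise edge-disjoint `x`–`y` paths avoiding `W ∖ {x,y}`. -/
def auxAdj (G : Multigraph V E) (W : Set V) (m : ℕ) (x y : V) : Prop :=
  x ∈ W ∧ y ∈ W ∧ ∃ P : Fin m → G.Walk x y, (∀ i, (P i).edges.Nodup) ∧
    (∀ i j, i ≠ j → ∀ e ∈ (P i).edges, e ∉ (P j).edges) ∧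
    (∀ i, ∀ v ∈ (P i).support, v ∈ W → v = x ∨ v = y)

/-- The auxiliary simple graph `G(m, W)`. -/
def auxGraph (G : Multigraph V E) (W : Set V) (m : ℕ) : SimpleGraph V where
  Adj x y := x ≠ y ∧ (G.auxAdj W m x y ∨ G.auxAdj W m y x)
  symm := ⟨fun x y h => ⟨h.1.symm, h.2.symm⟩⟩
  loopless := ⟨fun x h => h.1 rfl⟩

end Multigraph

/-- `H` contains `K_{1,k}` as a minor: a centre branch set joined to `k` pairwise
disjoint branch sets, all inducing connected subgraphs. -/
def SimpleGraph.HasStarMinor {V : Type*} (H : SimpleGraph V) (k : ℕ) : Prop :=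
  ∃ C : Fin (k + 1) → Set V, (∀ i, (C i).Nonempty) ∧
    (∀ i, (H.induce (C i)).Connected) ∧
    (∀ i j, i ≠ j → Disjoint (C i) (C j)) ∧
    (∀ i, i ≠ 0 → ∃ u ∈ C 0, ∃ v ∈ C i, H.Adj u v)

/-- A simple graph is a vertex-disjoint union of (possibly trivial) paths. -/
def SimpleGraph.IsLinearForest {α : Type*} (H : SimpleGraph α) : Prop :=
  H.IsAcyclic ∧ ∀ v : α, (H.neighborSet v).ncard ≤ 2

namespace StarAux
open Finset

variable {V : Type*} [Fintype V] {G : SimpleGraph V}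

/-- big-degree predicate -/
def DB (G : SimpleGraph V) (v : V) : Prop := 3 ≤ (G.neighborFinset v).card

/-- A rooted forest-like growth state. -/
structure GSt (G : SimpleGraph V) where
  Q : Finset V
  r : V
  hr : r ∈ Q
  par : V → V
  dep : V → ℕ
  hmem : ∀ v ∈ Q, v ≠ r → par v ∈ Q
  hadj : ∀ v ∈ Q, v ≠ r → G.Adj (par v) v
  hdep : ∀ v ∈ Q, v ≠ r → dep (par v) < dep v
  hinv : ∀ v ∈ Q, (∃ w ∈ Q, w ≠ r ∧ par w = v) → G.neighborFinset v ⊆ Q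

namespace GSt

variable (S : GSt G)

noncomputable def out (v : V) : ℕ := (G.neighborFinset v \ S.Q).card
noncomputable def Lf : Finset V := S.Q.filter (fun v => ¬ ∃ w ∈ S.Q, w ≠ S.r ∧ S.par w = v)
noncomputable def Lv : Finset V := S.Q.filter (fun v => 0 < S.out v)
noncomputable def LvD : Finset V := S.Lv.filter (DB G)
noncomputable def QD : Finset V := S.Q.filter (DB G)
noncomputable def chi : ℤ :=
  if (S.Lv.Nonempty ∧ ∀ v ∈ S.Lv, S.out v = 1 ∧ DB G v) then 1 else 0
noncomputable def phi1 : ℤ :=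
  4 * S.Lf.card - S.QD.card + S.LvD.card - 2 * S.Lv.card - S.chi
noncomputable def phitip (u : V) : ℤ :=
  4 * S.Lf.card - S.QD.card + S.LvD.card - 2 * S.Lv.card
    - (if DB G u then 1 else 0) + (if 2 ≤ S.out u then 1 else 0)

lemma chi_nonneg : 0 ≤ S.chi := by
  unfold chi; split <;> norm_num

lemma chi_le_one : S.chi ≤ 1 := by
  unfold chi; split <;> norm_num

lemma mem_Lv_iff {v : V} : v ∈ S.Lv ↔ v ∈ S.Q ∧ 0 < S.out v := by
  simp [Lv]

lemma mem_Lf_iff {v : V} :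
    v ∈ S.Lf ↔ v ∈ S.Q ∧ ¬ ∃ w ∈ S.Q, w ≠ S.r ∧ S.par w = v := by
  simp [Lf]

/-- grow the tree by attaching all outside neighbours of `a`. -/
noncomputable def op (a : V) (ha : a ∈ S.Q) : GSt G where
  Q := S.Q ∪ (G.neighborFinset a \ S.Q)
  r := S.r
  hr := Finset.mem_union_left _ S.hr
  par := fun v => if v ∈ G.neighborFinset a \ S.Q then a else S.par v
  dep := fun v => if v ∈ G.neighborFinset a \ S.Q then S.dep a + 1 else S.dep v
  hmem := by
    intro v hv hvr
    rcases Finset.mem_union.mp hv with h | h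
    · have hvn : v ∉ G.neighborFinset a \ S.Q := by
        simp only [Finset.mem_sdiff]; tauto
      simp only [if_neg hvn]
      exact Finset.mem_union_left _ (S.hmem v h hvr)
    · simp only [h, if_pos]
      exact Finset.mem_union_left _ ha
  hadj := by
    intro v hv hvr
    rcases Finset.mem_union.mp hv with h | h
    · have hvn : v ∉ G.neighborFinset a \ S.Q := by
        simp only [Finset.mem_sdiff]; tauto
      simpa [hvn] using S.hadj v h hvr
    · have h2 := (Finset.mem_sdiff.mp h).1
      simp only [if_pos h]
      rw [SimpleGraph.mem_neighborFinset] at h2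
      exact h2
  hdep := by
    intro v hv hvr
    rcases Finset.mem_union.mp hv with h | h
    · have hvn : v ∉ G.neighborFinset a \ S.Q := by
        simp only [Finset.mem_sdiff]; tauto
      have hpn : S.par v ∉ G.neighborFinset a \ S.Q := by
        have := S.hmem v h hvr
        simp only [Finset.mem_sdiff]; tauto
      simpa [hvn, hpn] using S.hdep v h hvr
    · have han : a ∉ G.neighborFinset a \ S.Q := by
        simp only [Finset.mem_sdiff]; tauto
      simp [h, han]
  hinv := by
    intro v hv hint
    obtain ⟨w, hw, hwr, hwp⟩ := hint
    rcases Finset.mem_union.mp hw with h | h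
    · have hvn : w ∉ G.neighborFinset a \ S.Q := by
        simp only [Finset.mem_sdiff]; tauto
      simp only [if_neg hvn] at hwp
      have hvQ : v ∈ S.Q := hwp ▸ S.hmem w h hwr
      have := S.hinv v hvQ ⟨w, h, hwr, hwp⟩
      exact this.trans (Finset.subset_union_left)
    · simp only [if_pos h] at hwp
      subst hwp
      intro z hz
      by_cases hzQ : z ∈ S.Q
      · exact Finset.mem_union_left _ hzQ
      · exact Finset.mem_union_right _ (Finset.mem_sdiff.mpr ⟨hz, hzQ⟩)

variable {S}

lemma op_Q {a : V} (ha : a ∈ S.Q) :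
    (S.op a ha).Q = S.Q ∪ (G.neighborFinset a \ S.Q) := rfl

lemma op_out {a : V} (ha : a ∈ S.Q) (v : V) :
    (S.op a ha).out v = ((G.neighborFinset v \ S.Q) \ (G.neighborFinset a \ S.Q)).card := by
  unfold out
  congr 1
  ext z
  simp only [op_Q, Finset.mem_sdiff, Finset.mem_union]
  tauto

lemma op_out_le {a : V} (ha : a ∈ S.Q) (v : V) :
    (S.op a ha).out v ≤ S.out v := by
  rw [op_out]
  exact Finset.card_le_card (Finset.sdiff_subset)

lemma op_out_a {a : V} (ha : a ∈ S.Q) : (S.op a ha).out a = 0 := by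
  rw [op_out]
  simp

lemma op_card_compl {a : V} (ha : a ∈ S.Q) :
    (Finset.univ \ (S.op a ha).Q).card + (G.neighborFinset a \ S.Q).card
      = (Finset.univ \ S.Q).card := by
  rw [op_Q]
  have h1 : (G.neighborFinset a \ S.Q) ⊆ Finset.univ \ S.Q := fun z hz => by
    simp only [Finset.mem_sdiff] at hz ⊢
    exact ⟨Finset.mem_univ _, hz.2⟩
  have h2 : Finset.univ \ (S.Q ∪ (G.neighborFinset a \ S.Q))
      = (Finset.univ \ S.Q) \ (G.neighborFinset a \ S.Q) := by
    ext z; simp only [Finset.mem_sdiff, Finset.mem_union]; tauto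
  rw [h2, Finset.card_sdiff_of_subset h1]
  have h3 := Finset.card_le_card h1
  omega

lemma op_r {a : V} (ha : a ∈ S.Q) : (S.op a ha).r = S.r := rfl

lemma op_par_new {a w : V} (ha : a ∈ S.Q) (hw : w ∈ G.neighborFinset a \ S.Q) :
    (S.op a ha).par w = a := by simp only [op, if_pos hw]

lemma op_par_old {a w : V} (ha : a ∈ S.Q) (hw : w ∉ G.neighborFinset a \ S.Q) :
    (S.op a ha).par w = S.par w := by simp only [op, if_neg hw]

lemma filter_split (s : Finset V) (p : V → Prop) :
    (s.filter p).card + (s.filter (fun v => ¬ p v)).card = s.card := by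
  classical
  rw [← Finset.card_union_of_disjoint (Finset.disjoint_filter_filter_not s s p),
    Finset.filter_union_filter_not_eq]

lemma op_Lf {a : V} (ha : a ∈ S.Q) (haLf : a ∈ S.Lf) (hout : 0 < S.out a) :
    (S.op a ha).Lf = (S.Lf.erase a) ∪ (G.neighborFinset a \ S.Q) := by
  have hNw : (G.neighborFinset a \ S.Q).Nonempty := Finset.card_pos.mp hout
  obtain ⟨w₀, hw₀⟩ := hNw
  have hw₀Q : w₀ ∉ S.Q := (Finset.mem_sdiff.mp hw₀).2
  have hw₀r : w₀ ≠ S.r := fun h => hw₀Q (h ▸ S.hr)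
  ext v
  rw [mem_Lf_iff, Finset.mem_union, Finset.mem_erase, mem_Lf_iff, op_r ha, op_Q ha]
  constructor
  · rintro ⟨hv1, hv2⟩
    rcases Finset.mem_union.mp hv1 with hvQ | hvN
    · left
      refine ⟨?_, hvQ, ?_⟩
      · rintro rfl
        exact hv2 ⟨w₀, Finset.mem_union_right _ hw₀, hw₀r, op_par_new ha hw₀⟩
      · rintro ⟨w, hw, hwr, hwp⟩
        have hwN : w ∉ G.neighborFinset a \ S.Q := by
          simp only [Finset.mem_sdiff]; tauto
        exact hv2 ⟨w, Finset.mem_union_left _ hw, hwr, (op_par_old ha hwN).trans hwp⟩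
    · right; exact hvN
  · rintro (⟨hva, hvQ, hv2⟩ | hvN)
    · refine ⟨Finset.mem_union_left _ hvQ, ?_⟩
      rintro ⟨w, hw, hwr, hwp⟩
      by_cases hwN : w ∈ G.neighborFinset a \ S.Q
      · rw [op_par_new ha hwN] at hwp; exact hva hwp.symm
      · rw [op_par_old ha hwN] at hwp
        rcases Finset.mem_union.mp hw with hw | hw
        · exact hv2 ⟨w, hw, hwr, hwp⟩
        · exact hwN hw
    · refine ⟨Finset.mem_union_right _ hvN, ?_⟩
      rintro ⟨w, hw, hwr, hwp⟩
      have hvQ : v ∉ S.Q := (Finset.mem_sdiff.mp hvN).2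
      by_cases hwN : w ∈ G.neighborFinset a \ S.Q
      · rw [op_par_new ha hwN] at hwp
        exact hvQ (hwp ▸ ha)
      · rw [op_par_old ha hwN] at hwp
        rcases Finset.mem_union.mp hw with hw | hw
        · exact hvQ (hwp ▸ S.hmem w hw hwr)
        · exact hwN hw

lemma a_mem_Lv {a : V} (ha : a ∈ S.Q) (hout : 0 < S.out a) : a ∈ S.Lv :=
  S.mem_Lv_iff.mpr ⟨ha, hout⟩

lemma op_Lf_card {a : V} (ha : a ∈ S.Q) (haLf : a ∈ S.Lf) (hout : 0 < S.out a) :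
    (S.op a ha).Lf.card + 1 = S.Lf.card + S.out a := by
  rw [op_Lf ha haLf hout]
  have hd : Disjoint (S.Lf.erase a) (G.neighborFinset a \ S.Q) := by
    refine Finset.disjoint_left.mpr ?_
    intro z hz hz'
    have : z ∈ S.Q := (S.mem_Lf_iff.mp (Finset.mem_of_mem_erase hz)).1
    exact (Finset.mem_sdiff.mp hz').2 this
  rw [Finset.card_union_of_disjoint hd, Finset.card_erase_of_mem haLf]
  have : 1 ≤ S.Lf.card := Finset.card_pos.mpr ⟨a, haLf⟩
  unfold out
  omega

/-- old live vertices that survive / die, new live vertices. -/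
noncomputable def SvF (S T : GSt G) (a : V) : Finset V :=
  (S.Lv.erase a).filter (fun v => 0 < T.out v)
noncomputable def DdF (S T : GSt G) (a : V) : Finset V :=
  (S.Lv.erase a).filter (fun v => ¬ 0 < T.out v)
noncomputable def NwLF (S T : GSt G) (a : V) : Finset V :=
  (G.neighborFinset a \ S.Q).filter (fun v => 0 < T.out v)
noncomputable def NwDeadF (S T : GSt G) (a : V) : Finset V :=
  (G.neighborFinset a \ S.Q).filter (fun v => ¬ 0 < T.out v)

lemma op_Lv {a : V} (ha : a ∈ S.Q) (hout : 0 < S.out a) :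
    (S.op a ha).Lv = SvF S (S.op a ha) a ∪ NwLF S (S.op a ha) a := by
  ext v
  rw [Finset.mem_union]
  unfold SvF NwLF
  rw [mem_Lv_iff, Finset.mem_filter, Finset.mem_filter, Finset.mem_erase, op_Q ha]
  constructor
  · rintro ⟨hv1, hv2⟩
    rcases Finset.mem_union.mp hv1 with hvQ | hvN
    · left
      refine ⟨⟨?_, S.mem_Lv_iff.mpr ⟨hvQ, lt_of_lt_of_le hv2 (op_out_le ha v)⟩⟩, hv2⟩
      rintro rfl
      rw [op_out_a ha] at hv2; exact Nat.lt_irrefl 0 hv2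
    · right; exact ⟨hvN, hv2⟩
  · rintro (⟨⟨hva, hvLv⟩, hv2⟩ | ⟨hvN, hv2⟩)
    · exact ⟨Finset.mem_union_left _ (S.mem_Lv_iff.mp hvLv).1, hv2⟩
    · exact ⟨Finset.mem_union_right _ hvN, hv2⟩

lemma sv_disj_nw {a : V} (T : GSt G) :
    Disjoint (SvF S T a) (NwLF S T a) := by
  refine Finset.disjoint_left.mpr ?_
  intro z hz hz'
  have hzQ : z ∈ S.Q :=
    (S.mem_Lv_iff.mp (Finset.mem_of_mem_erase (Finset.mem_filter.mp hz).1)).1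
  exact (Finset.mem_sdiff.mp (Finset.mem_filter.mp hz').1).2 hzQ

lemma op_Lv_card {a : V} (ha : a ∈ S.Q) (hout : 0 < S.out a) :
    (S.op a ha).Lv.card = (SvF S (S.op a ha) a).card + (NwLF S (S.op a ha) a).card := by
  rw [op_Lv ha hout, Finset.card_union_of_disjoint (sv_disj_nw _)]

lemma lv_card_split {a : V} (T : GSt G) (haLv : a ∈ S.Lv) :
    S.Lv.card = (SvF S T a).card + (DdF S T a).card + 1 := by
  have h1 : (SvF S T a).card + (DdF S T a).card = (S.Lv.erase a).card := by
    unfold SvF DdF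
    rw [← Finset.card_union_of_disjoint (Finset.disjoint_filter_filter_not _ _ _),
      Finset.filter_union_filter_not_eq]
  have h2 : (S.Lv.erase a).card + 1 = S.Lv.card := Finset.card_erase_add_one haLv
  omega

lemma op_LvD_card {a : V} (ha : a ∈ S.Q) (hout : 0 < S.out a) :
    (S.op a ha).LvD.card
      = ((SvF S (S.op a ha) a).filter (DB G)).card
        + ((NwLF S (S.op a ha) a).filter (DB G)).card := by
  have : (S.op a ha).LvD = ((SvF S (S.op a ha) a).filter (DB G)) ∪ ((NwLF S (S.op a ha) a).filter (DB G)) := by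
    unfold LvD
    rw [op_Lv ha hout, Finset.filter_union]
  rw [this, Finset.card_union_of_disjoint]
  exact Finset.disjoint_filter_filter (sv_disj_nw _)

lemma lvD_card_split {a : V} (T : GSt G) (haLv : a ∈ S.Lv) :
    S.LvD.card = ((SvF S T a).filter (DB G)).card + ((DdF S T a).filter (DB G)).card
      + (if DB G a then 1 else 0) := by
  have h1 : ((SvF S T a).filter (DB G)).card + ((DdF S T a).filter (DB G)).card
      = (S.LvD.erase a).card := by
    have e1 : (SvF S T a).filter (DB G)
        = (S.LvD.erase a).filter (fun v => 0 < T.out v) := by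
      ext z
      simp only [SvF, LvD, Finset.mem_filter, Finset.mem_erase]
      tauto
    have e2 : (DdF S T a).filter (DB G)
        = (S.LvD.erase a).filter (fun v => ¬ 0 < T.out v) := by
      ext z
      simp only [DdF, LvD, Finset.mem_filter, Finset.mem_erase]
      tauto
    rw [e1, e2]
    rw [← Finset.card_union_of_disjoint (Finset.disjoint_filter_filter_not _ _ _),
      Finset.filter_union_filter_not_eq]
  by_cases hda : DB G a
  · have haLvD : a ∈ S.LvD := Finset.mem_filter.mpr ⟨haLv, hda⟩
    have h2 : (S.LvD.erase a).card + 1 = S.LvD.card := Finset.card_erase_add_one haLvD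
    rw [if_pos hda]
    omega
  · have haLvD : a ∉ S.LvD := fun h => hda (Finset.mem_filter.mp h).2
    have h2 : S.LvD.erase a = S.LvD := Finset.erase_eq_of_notMem haLvD
    rw [if_neg hda]
    rw [h2] at h1
    omega

lemma op_QD_card {a : V} (ha : a ∈ S.Q) :
    (S.op a ha).QD.card = S.QD.card + ((G.neighborFinset a \ S.Q).filter (DB G)).card := by
  have : (S.op a ha).QD = S.QD ∪ ((G.neighborFinset a \ S.Q).filter (DB G)) := by
    unfold QD
    rw [op_Q ha, Finset.filter_union]
  have hdisj : Disjoint S.QD ((G.neighborFinset a \ S.Q).filter (DB G)) := by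
    refine Finset.disjoint_left.mpr ?_
    intro z hz hz'
    exact (Finset.mem_sdiff.mp (Finset.mem_filter.mp hz').1).2 (Finset.mem_filter.mp hz).1
  rw [this, Finset.card_union_of_disjoint hdisj]

lemma nwD_le {a : V} (T : GSt G) :
    ((G.neighborFinset a \ S.Q).filter (DB G)).card
      ≤ (NwDeadF S T a).card + ((NwLF S T a).filter (DB G)).card := by
  have h1 : ((G.neighborFinset a \ S.Q).filter (DB G)) \ (NwLF S T a) ⊆ NwDeadF S T a := by
    intro z hz
    simp only [Finset.mem_sdiff, Finset.mem_filter, NwLF, NwDeadF] at *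
    tauto
  have h2 : ((G.neighborFinset a \ S.Q).filter (DB G)) ∩ (NwLF S T a)
      ⊆ (NwLF S T a).filter (DB G) := by
    intro z hz
    simp only [Finset.mem_inter, Finset.mem_filter, NwLF] at *
    tauto
  have h3 := Finset.card_inter_add_card_sdiff
    ((G.neighborFinset a \ S.Q).filter (DB G)) (NwLF S T a)
  have h4 := Finset.card_le_card h1
  have h5 := Finset.card_le_card h2
  omega

lemma nw_card_split {a : V} (T : GSt G) :
    (NwLF S T a).card + (NwDeadF S T a).card = S.out a := by
  unfold NwLF NwDeadF out
  rw [← Finset.card_union_of_disjoint (Finset.disjoint_filter_filter_not _ _ _),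
      Finset.filter_union_filter_not_eq]

lemma filterDB_le (t : Finset V) : (t.filter (DB G)).card ≤ t.card :=
  Finset.card_le_card (Finset.filter_subset _ _)

/-- potential estimate for a full expansion at a leaf with at least 2 outside neighbours. -/
lemma deltaA {a : V} (ha : a ∈ S.Q) (haLf : a ∈ S.Lf) (h2 : 2 ≤ S.out a) :
    S.phitip a ≤ (S.op a ha).phi1 := by
  have hout : 0 < S.out a := by omega
  have haLv := a_mem_Lv ha hout
  have F1 := op_Lf_card ha haLf hout
  have F2 := op_Lv_card ha hout
  have F3 := lv_card_split (S := S) (S.op a ha) haLv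
  have F4 := op_LvD_card ha hout
  have F5 := lvD_card_split (S := S) (S.op a ha) haLv
  have F6 := op_QD_card ha
  have F7 := nwD_le (S := S) (a := a) (S.op a ha)
  have F8 := nw_card_split (S := S) (a := a) (S.op a ha)
  have F9 := filterDB_le (G := G) (DdF S (S.op a ha) a)
  have F10 := filterDB_le (G := G) (NwLF S (S.op a ha) a)
  have F11 : (NwLF S (S.op a ha) a).card ≤ S.out a := by omega
  have B1 := (S.op a ha).chi_le_one
  have B2 := (S.op a ha).chi_nonneg
  unfold phi1 phitip
  by_cases hda : DB G a
  · rw [if_pos hda] at F5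
    rw [if_pos hda, if_pos h2]
    omega
  · rw [if_neg hda] at F5
    rw [if_neg hda, if_pos h2]
    omega

lemma chain_x_facts {a x : V} (ha : a ∈ S.Q)
    (hx : G.neighborFinset a \ S.Q = {x}) :
    x ∉ S.Q ∧ G.Adj a x ∧ (S.op a ha).Q = insert x S.Q := by
  have hx1 : x ∈ G.neighborFinset a \ S.Q := by rw [hx]; exact Finset.mem_singleton_self x
  have hx2 := Finset.mem_sdiff.mp hx1
  refine ⟨hx2.2, by rw [← SimpleGraph.mem_neighborFinset]; exact hx2.1, ?_⟩
  rw [op_Q ha, hx]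
  ext z
  simp only [Finset.mem_union, Finset.mem_insert, Finset.mem_singleton]
  tauto

lemma chain_dd {a x : V} (ha : a ∈ S.Q)
    (hx : G.neighborFinset a \ S.Q = {x})
    (hinv2 : ∀ v ∈ S.Lv, v ≠ a → S.out v = 1) :
    (G.neighborFinset x).card ≤ 1 + (DdF S (S.op a ha) a).card + (S.op a ha).out x := by
  obtain ⟨hxQ, hax, hQ'⟩ := chain_x_facts ha hx
  have hYsub : (G.neighborFinset x ∩ S.Q).erase a ⊆ DdF S (S.op a ha) a := by
    intro y hy
    have hya : y ≠ a := (Finset.mem_erase.mp hy).1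
    have hy2 := Finset.mem_inter.mp (Finset.mem_erase.mp hy).2
    have hyx : G.Adj y x := by
      exact ((G.mem_neighborFinset x y).mp hy2.1).symm
    have hxy : x ∈ G.neighborFinset y \ S.Q :=
      Finset.mem_sdiff.mpr ⟨(G.mem_neighborFinset y x).mpr hyx, hxQ⟩
    have hylive : 0 < S.out y := Finset.card_pos.mpr ⟨x, hxy⟩
    have hyLv : y ∈ S.Lv := S.mem_Lv_iff.mpr ⟨hy2.2, hylive⟩
    have hy1 : S.out y = 1 := hinv2 y hyLv hya
    have hsing : G.neighborFinset y \ S.Q = {x} := by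
      obtain ⟨z, hz⟩ := Finset.card_eq_one.mp hy1
      rw [hz] at hxy ⊢
      rw [Finset.mem_singleton.mp hxy]
    refine Finset.mem_filter.mpr ⟨Finset.mem_erase.mpr ⟨hya, hyLv⟩, ?_⟩
    rw [op_out ha, hsing, hx]
    simp
  have hcov : G.neighborFinset x
      ⊆ insert a ((G.neighborFinset x ∩ S.Q).erase a)
        ∪ (G.neighborFinset x \ (S.op a ha).Q) := by
    intro z hz
    rw [Finset.mem_union, Finset.mem_insert]
    by_cases hzQ : z ∈ S.Q
    · by_cases hza : z = a
      · exact Or.inl (Or.inl hza)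
      · exact Or.inl (Or.inr (Finset.mem_erase.mpr ⟨hza, Finset.mem_inter.mpr ⟨hz, hzQ⟩⟩))
    · right
      rw [hQ']
      refine Finset.mem_sdiff.mpr ⟨hz, ?_⟩
      rw [Finset.mem_insert]
      push_neg
      refine ⟨?_, hzQ⟩
      rintro rfl
      exact G.irrefl ((G.mem_neighborFinset _ _).mp hz)
  calc (G.neighborFinset x).card
      ≤ (insert a ((G.neighborFinset x ∩ S.Q).erase a)
          ∪ (G.neighborFinset x \ (S.op a ha).Q)).card := Finset.card_le_card hcov
    _ ≤ (insert a ((G.neighborFinset x ∩ S.Q).erase a)).card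
          + (G.neighborFinset x \ (S.op a ha).Q).card := Finset.card_union_le _ _
    _ ≤ (1 + ((G.neighborFinset x ∩ S.Q).erase a).card) + (S.op a ha).out x := by
        unfold out
        have := Finset.card_insert_le a ((G.neighborFinset x ∩ S.Q).erase a)
        omega
    _ ≤ 1 + (DdF S (S.op a ha) a).card + (S.op a ha).out x := by
        have := Finset.card_le_card hYsub
        omega

lemma chain_nwL {a x : V} (ha : a ∈ S.Q)
    (hx : G.neighborFinset a \ S.Q = {x}) :
    (NwLF S (S.op a ha) a).card = (if 0 < (S.op a ha).out x then 1 else 0)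
    ∧ ((NwLF S (S.op a ha) a).filter (DB G)).card
        = (if (0 < (S.op a ha).out x ∧ DB G x) then 1 else 0) := by
  constructor
  · unfold NwLF
    rw [hx]
    by_cases h : 0 < (S.op a ha).out x
    · rw [if_pos h, Finset.filter_singleton, if_pos h]
      simp
    · rw [if_neg h, Finset.filter_singleton, if_neg h]
      simp
  · unfold NwLF
    rw [hx]
    by_cases h : 0 < (S.op a ha).out x
    · rw [Finset.filter_singleton, if_pos h, Finset.filter_singleton]
      by_cases h2 : DB G x
      · rw [if_pos h2, if_pos ⟨h, h2⟩]; simp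
      · rw [if_neg h2, if_neg (by tauto)]; simp
    · rw [Finset.filter_singleton, if_neg h, if_neg (by tauto)]
      simp

lemma chain_nwD {a x : V} (ha : a ∈ S.Q)
    (hx : G.neighborFinset a \ S.Q = {x}) :
    ((G.neighborFinset a \ S.Q).filter (DB G)).card = (if DB G x then 1 else 0) := by
  rw [hx, Finset.filter_singleton]
  by_cases h : DB G x
  · rw [if_pos h, if_pos h]; simp
  · rw [if_neg h, if_neg h]; simp

/-- chain step, case where the new vertex is dead on arrival. -/
lemma deltaC1 {a x : V} (ha : a ∈ S.Q) (haLf : a ∈ S.Lf) (h1 : S.out a = 1)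
    (hx : G.neighborFinset a \ S.Q = {x})
    (hdead : (S.op a ha).out x = 0) :
    S.phitip a ≤ (S.op a ha).phi1 := by
  have hout : 0 < S.out a := by omega
  have haLv := a_mem_Lv ha hout
  have F1 := op_Lf_card ha haLf hout
  have F2 := op_Lv_card ha hout
  have F3 := lv_card_split (S := S) (S.op a ha) haLv
  have F4 := op_LvD_card ha hout
  have F5 := lvD_card_split (S := S) (S.op a ha) haLv
  have F6 := op_QD_card ha
  have F7 := (chain_nwL ha hx).1
  have F7' := (chain_nwL ha hx).2
  have F8 := chain_nwD (S := S) ha hx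
  have F9 := filterDB_le (G := G) (DdF S (S.op a ha) a)
  have B1 := (S.op a ha).chi_le_one
  have B2 := (S.op a ha).chi_nonneg
  rw [if_neg (by omega : ¬ 0 < (S.op a ha).out x)] at F7
  rw [if_neg (by simp [hdead] : ¬ (0 < (S.op a ha).out x ∧ DB G x))] at F7'
  have hno2 : ¬ 2 ≤ S.out a := by omega
  unfold phi1 phitip
  by_cases hda : DB G a <;> by_cases hdx : DB G x
  · rw [if_pos hda] at F5; rw [if_pos hdx] at F8; rw [if_pos hda, if_neg hno2]; omega
  · rw [if_pos hda] at F5; rw [if_neg hdx] at F8; rw [if_pos hda, if_neg hno2]; omega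
  · rw [if_neg hda] at F5; rw [if_pos hdx] at F8; rw [if_neg hda, if_neg hno2]; omega
  · rw [if_neg hda] at F5; rw [if_neg hdx] at F8; rw [if_neg hda, if_neg hno2]; omega

/-- chain step, case where the new vertex is still live. -/
lemma deltaC2 {a x : V} (ha : a ∈ S.Q) (haLf : a ∈ S.Lf) (h1 : S.out a = 1)
    (hx : G.neighborFinset a \ S.Q = {x})
    (hlive : 0 < (S.op a ha).out x)
    (hinv2 : ∀ v ∈ S.Lv, v ≠ a → S.out v = 1) :
    S.phitip a ≤ (S.op a ha).phitip x := by
  have hout : 0 < S.out a := by omega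
  have haLv := a_mem_Lv ha hout
  have F1 := op_Lf_card ha haLf hout
  have F2 := op_Lv_card ha hout
  have F3 := lv_card_split (S := S) (S.op a ha) haLv
  have F4 := op_LvD_card ha hout
  have F5 := lvD_card_split (S := S) (S.op a ha) haLv
  have F6 := op_QD_card ha
  have F7 := (chain_nwL ha hx).1
  have F7' := (chain_nwL ha hx).2
  have F8 := chain_nwD (S := S) ha hx
  have F9 := filterDB_le (G := G) (DdF S (S.op a ha) a)
  have FY := chain_dd ha hx hinv2
  rw [if_pos hlive] at F7
  have hno2 : ¬ 2 ≤ S.out a := by omega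
  unfold phitip
  by_cases hdx : DB G x
  · rw [if_pos (⟨hlive, hdx⟩ : (0 < (S.op a ha).out x ∧ DB G x))] at F7'
    rw [if_pos hdx] at F8
    have hdeg : 3 ≤ (G.neighborFinset x).card := hdx
    by_cases hda : DB G a <;> [rw [if_pos hda] at F5; rw [if_neg hda] at F5] <;>
      [rw [if_pos hda, if_neg hno2, if_pos hdx]; rw [if_neg hda, if_neg hno2, if_pos hdx]] <;>
      by_cases h2x : 2 ≤ (S.op a ha).out x <;>
      [rw [if_pos h2x]; rw [if_neg h2x]; rw [if_pos h2x]; rw [if_neg h2x]] <;> omega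
  · rw [if_neg (by tauto)] at F7'
    rw [if_neg hdx] at F8
    by_cases hda : DB G a <;> [rw [if_pos hda] at F5; rw [if_neg hda] at F5] <;>
      [rw [if_pos hda, if_neg hno2, if_neg hdx]; rw [if_neg hda, if_neg hno2, if_neg hdx]] <;>
      by_cases h2x : 2 ≤ (S.op a ha).out x <;>
      [rw [if_pos h2x]; rw [if_neg h2x]; rw [if_pos h2x]; rw [if_neg h2x]] <;> omega

lemma chain_xLf {a x : V} (ha : a ∈ S.Q) (haLf : a ∈ S.Lf) (h1 : S.out a = 1)
    (hx : G.neighborFinset a \ S.Q = {x}) :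
    x ∈ (S.op a ha).Lf := by
  have hout : 0 < S.out a := by omega
  rw [op_Lf ha haLf hout, Finset.mem_union, hx]
  exact Or.inr (Finset.mem_singleton_self x)

lemma chain_inv2 {a x : V} (ha : a ∈ S.Q) (h1 : S.out a = 1)
    (hx : G.neighborFinset a \ S.Q = {x})
    (hinv2 : ∀ v ∈ S.Lv, v ≠ a → S.out v = 1) :
    ∀ v ∈ (S.op a ha).Lv, v ≠ x → (S.op a ha).out v = 1 := by
  intro v hv hvx
  have hout : 0 < S.out a := by omega
  rw [op_Lv ha hout, Finset.mem_union] at hv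
  rcases hv with hv | hv
  · have h2 := Finset.mem_filter.mp hv
    have h3 := Finset.mem_erase.mp h2.1
    have h4 : S.out v = 1 := hinv2 v h3.2 h3.1
    have h5 : (S.op a ha).out v ≤ S.out v := op_out_le ha v
    omega
  · exfalso
    have := (Finset.mem_filter.mp hv).1
    rw [hx, Finset.mem_singleton] at this
    exact hvx this

lemma live_leaf (S : GSt G) {a : V} (ha : a ∈ S.Q) (hl : 0 < S.out a) : a ∈ S.Lf := by
  rw [mem_Lf_iff]
  refine ⟨ha, ?_⟩
  intro hchild
  have hsub := S.hinv a ha hchild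
  obtain ⟨z, hz⟩ := Finset.card_pos.mp hl
  have hz2 := Finset.mem_sdiff.mp hz
  exact hz2.2 (hsub hz2.1)

lemma exists_live (hG : G.Connected) (S : GSt G) (hne : S.Q ≠ Finset.univ) :
    ∃ a ∈ S.Q, 0 < S.out a := by
  have hw : ∃ w, w ∉ S.Q := by
    by_contra h
    push_neg at h
    exact hne (Finset.eq_univ_iff_forall.mpr h)
  obtain ⟨w, hw⟩ := hw
  obtain ⟨p⟩ := hG.preconnected S.r w
  obtain ⟨d, _, hd1, hd2⟩ := p.exists_boundary_dart (↑S.Q : Set V)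
    (by exact_mod_cast S.hr) (by exact_mod_cast hw)
  refine ⟨d.toProd.1, by exact_mod_cast hd1, ?_⟩
  have hmem : d.toProd.2 ∈ G.neighborFinset d.toProd.1 \ S.Q := by
    rw [Finset.mem_sdiff]
    exact ⟨(G.mem_neighborFinset _ _).mpr d.adj, by exact_mod_cast hd2⟩
  exact Finset.card_pos.mpr ⟨d.toProd.2, hmem⟩

noncomputable def DS (G : SimpleGraph V) : ℕ := (Finset.univ.filter (DB G)).card

def Done (G : SimpleGraph V) [Fintype V] (b : ℤ) : Prop :=
  ∃ S' : GSt G, S'.Q = Finset.univ ∧ b + (DS G : ℤ) ≤ 4 * S'.Lf.card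

lemma done_mono {b b' : ℤ} (h : b ≤ b') (hd : Done G b') : Done G b := by
  obtain ⟨S', h1, h2⟩ := hd
  exact ⟨S', h1, by omega⟩

lemma Lv_empty_of_univ (S : GSt G) (h : S.Q = Finset.univ) : S.Lv = ∅ := by
  ext v
  simp only [mem_Lv_iff, Finset.notMem_empty, iff_false, not_and]
  intro _
  unfold out
  rw [h]
  simp

lemma done_univ (S : GSt G) (h : S.Q = Finset.univ) : Done G S.phi1 := by
  refine ⟨S, h, ?_⟩
  have hLv := Lv_empty_of_univ S h
  have hchi : S.chi = 0 := by
    unfold chi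
    rw [if_neg]
    rintro ⟨hne, -⟩
    rw [hLv] at hne
    exact Finset.not_nonempty_empty hne
  have hQD : S.QD.card = DS G := by unfold QD DS; rw [h]
  unfold phi1
  rw [hLv, hchi, hQD]
  unfold LvD
  rw [hLv]
  simp

lemma grow (hG : G.Connected) : ∀ m : ℕ,
    (∀ S : GSt G, ∀ a, a ∈ S.Lf → 0 < S.out a →
      (∀ v ∈ S.Lv, v ≠ a → S.out v = 1) →
      (Finset.univ \ S.Q).card ≤ m → Done G (S.phitip a)) ∧
    (∀ S : GSt G, (Finset.univ \ S.Q).card ≤ m → Done G S.phi1) := by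
  intro m
  induction m with
  | zero =>
    have huniv : ∀ S : GSt G, (Finset.univ \ S.Q).card ≤ 0 → S.Q = Finset.univ := by
      intro S h
      have h0 : Finset.univ \ S.Q = ∅ :=
        Finset.card_eq_zero.mp (le_antisymm h (Nat.zero_le _))
      have : (Finset.univ : Finset V) ⊆ S.Q := by
        intro z hz
        by_contra hzz
        have : z ∈ Finset.univ \ S.Q := Finset.mem_sdiff.mpr ⟨hz, hzz⟩
        rw [h0] at this
        exact Finset.notMem_empty z this
      exact Finset.univ_subset_iff.mp this
    constructor
    · intro S a haLf hout _ hm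
      exfalso
      have hQ := huniv S hm
      have : S.out a = 0 := by
        unfold out
        rw [hQ]
        simp
      omega
    · intro S hm
      exact done_univ S (huniv S hm)
  | succ m ih =>
    obtain ⟨ihtip, ih1⟩ := ih
    have tipcase : ∀ S : GSt G, ∀ a, a ∈ S.Lf → 0 < S.out a →
        (∀ v ∈ S.Lv, v ≠ a → S.out v = 1) →
        (Finset.univ \ S.Q).card ≤ m + 1 → Done G (S.phitip a) := by
      intro S a haLf hout hinv2 hm
      have ha : a ∈ S.Q := (S.mem_Lf_iff.mp haLf).1
      have hrfl : (G.neighborFinset a \ S.Q).card = S.out a := rfl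
      have hcard : (Finset.univ \ (S.op a ha).Q).card ≤ m := by
        have := op_card_compl ha
        omega
      by_cases h2 : 2 ≤ S.out a
      · exact done_mono (deltaA ha haLf h2) (ih1 (S.op a ha) hcard)
      · have h1 : S.out a = 1 := by omega
        obtain ⟨x, hx⟩ := Finset.card_eq_one.mp (hrfl.trans h1)
        by_cases hlive : 0 < (S.op a ha).out x
        · exact done_mono (deltaC2 ha haLf h1 hx hlive hinv2)
            (ihtip (S.op a ha) x (chain_xLf ha haLf h1 hx) hlive
              (chain_inv2 ha h1 hx hinv2) hcard)
        · have hdead : (S.op a ha).out x = 0 := by omega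
          exact done_mono (deltaC1 ha haLf h1 hx hdead) (ih1 (S.op a ha) hcard)
    refine ⟨tipcase, ?_⟩
    intro S hm
    by_cases hQ : S.Q = Finset.univ
    · exact done_univ S hQ
    · obtain ⟨a₀, ha₀, hl₀⟩ := exists_live hG S hQ
      by_cases hbig : ∃ v ∈ S.Q, 2 ≤ S.out v
      · obtain ⟨v, hv, hv2⟩ := hbig
        have hvLf : v ∈ S.Lf := live_leaf S hv (by omega)
        have hrfl : (G.neighborFinset v \ S.Q).card = S.out v := rfl
        have hcard : (Finset.univ \ (S.op v hv).Q).card ≤ m := by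
          have := op_card_compl hv
          omega
        refine done_mono ?_ (done_mono (deltaA hv hvLf hv2) (ih1 (S.op v hv) hcard))
        unfold phi1 phitip
        have hc := S.chi_nonneg
        rw [if_pos hv2]
        by_cases hda : DB G v
        · rw [if_pos hda]; omega
        · rw [if_neg hda]; omega
      · push_neg at hbig
        have hall : ∀ v ∈ S.Lv, S.out v = 1 := by
          intro v hv
          have h := S.mem_Lv_iff.mp hv
          have := hbig v h.1
          omega
        by_cases hnd : ∃ v ∈ S.Lv, ¬ DB G v
        · obtain ⟨u, huLv, hud⟩ := hnd
          have hu := S.mem_Lv_iff.mp huLv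
          have huLf := live_leaf S hu.1 hu.2
          refine done_mono ?_ (tipcase S u huLf hu.2 (fun v hv _ => hall v hv) hm)
          unfold phi1 phitip
          rw [if_neg hud]
          have hc := S.chi_nonneg
          have hn2 : ¬ 2 ≤ S.out u := by
            have := hall u huLv
            omega
          rw [if_neg hn2]
          omega
        · push_neg at hnd
          have ha₀Lf := live_leaf S ha₀ hl₀
          have ha₀Lv : a₀ ∈ S.Lv := S.mem_Lv_iff.mpr ⟨ha₀, hl₀⟩
          have hchi : S.chi = 1 := by
            unfold chi
            rw [if_pos ⟨⟨a₀, ha₀Lv⟩, fun v hv => ⟨hall v hv, hnd v hv⟩⟩]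
          refine done_mono ?_ (tipcase S a₀ ha₀Lf hl₀ (fun v hv _ => hall v hv) hm)
          unfold phi1 phitip
          rw [hchi]
          have hn2 : ¬ 2 ≤ S.out a₀ := by
            have := hall a₀ ha₀Lv
            omega
          rw [if_neg hn2]
          by_cases hda : DB G a₀
          · rw [if_pos hda]; omega
          · rw [if_neg hda]; omega

end GSt

open GSt

/-- the initial single-vertex state. -/
noncomputable def initSt (G : SimpleGraph V) (r : V) : GSt G where
  Q := {r}
  r := r
  hr := Finset.mem_singleton_self r
  par := fun _ => r
  dep := fun _ => 0
  hmem := by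
    intro v hv hvr
    exact absurd (Finset.mem_singleton.mp hv) hvr
  hadj := by
    intro v hv hvr
    exact absurd (Finset.mem_singleton.mp hv) hvr
  hdep := by
    intro v hv hvr
    exact absurd (Finset.mem_singleton.mp hv) hvr
  hinv := by
    rintro v hv ⟨w, hw, hwr, -⟩
    exact absurd (Finset.mem_singleton.mp hw) hwr

lemma main_bound (hG : G.Connected) (h2 : 2 ≤ Fintype.card V) :
    ∃ S' : GSt G, S'.Q = Finset.univ ∧ (DS G : ℤ) + 1 ≤ 4 * S'.Lf.card := by
  obtain ⟨r⟩ : Nonempty V := Fintype.card_pos_iff.mp (by omega)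
  set S₀ := initSt G r with hS₀
  have hQne : S₀.Q ≠ Finset.univ := by
    intro h
    have : Fintype.card V = 1 := by
      rw [← Finset.card_univ, ← h]
      simp [hS₀, initSt]
    omega
  obtain ⟨a, haQ, hal⟩ := exists_live hG S₀ hQne
  have har : a = r := by
    have : a ∈ ({r} : Finset V) := haQ
    exact Finset.mem_singleton.mp this
  subst har
  have hLf : S₀.Lf = {a} := by
    ext v
    rw [mem_Lf_iff]
    simp only [hS₀, initSt, Finset.mem_singleton]
    constructor
    · rintro ⟨h1, -⟩; exact h1
    · rintro rfl
      exact ⟨rfl, by rintro ⟨w, hw, hwr, -⟩; exact hwr hw⟩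
  have hLv : S₀.Lv = {a} := by
    ext v
    rw [mem_Lv_iff]
    constructor
    · rintro ⟨h1, -⟩; exact h1
    · intro hv
      have : v = a := by
        have : v ∈ ({a} : Finset V) := hv
        exact Finset.mem_singleton.mp this
      subst this
      exact ⟨hv, hal⟩
  have hphi : (1 : ℤ) ≤ S₀.phi1 := by
    have hc := S₀.chi_le_one
    unfold phi1 LvD QD
    rw [hLf, hLv]
    have : S₀.Q = {a} := rfl
    rw [this]
    simp only [Finset.card_singleton]
    omega
  obtain ⟨S', hS'Q, hS'⟩ := done_mono hphi
    ((grow hG (Finset.univ \ S₀.Q).card).2 S₀ le_rfl)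
  exact ⟨S', hS'Q, by omega⟩

lemma singleton_induce_connected (x : V) : (G.induce {x}).Connected := by
  rw [SimpleGraph.connected_iff]
  refine ⟨?_, ⟨⟨x, rfl⟩⟩⟩
  intro a b
  have : a = b := by
    apply Subtype.ext
    have ha := a.2
    have hb := b.2
    simp only [Set.mem_singleton_iff] at ha hb
    rw [ha, hb]
  rw [this]

lemma star_of_spanning (S : GSt G) (hQ : S.Q = Finset.univ) (k : ℕ)
    (hk : k ≤ S.Lf.card) (hV : 2 ≤ Fintype.card V) : G.HasStarMinor k := by
  classical
  set center : Set V := {v | ∃ w, w ≠ S.r ∧ S.par w = v} with hcenter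
  have hmemQ : ∀ v : V, v ∈ S.Q := fun v => hQ ▸ Finset.mem_univ v
  -- the root has a child
  have hrc : S.r ∈ center := by
    have key : ∀ n, ∀ v, v ≠ S.r → S.dep v ≤ n → ∃ w, w ≠ S.r ∧ S.par w = S.r := by
      intro n
      induction n with
      | zero =>
        intro v hv hd
        have := S.hdep v (hmemQ v) hv
        omega
      | succ n ihn =>
        intro v hv hd
        by_cases hp : S.par v = S.r
        · exact ⟨v, hv, hp⟩
        · refine ihn (S.par v) hp ?_
          have := S.hdep v (hmemQ v) hv
          omega
    obtain ⟨v, hv⟩ := Fintype.exists_ne_of_one_lt_card (by omega) S.r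
    exact key (S.dep v) v hv le_rfl
  -- the center is connected
  have hreach : ∀ n, ∀ v, ∀ hvc : v ∈ center, S.dep v ≤ n →
      (G.induce center).Reachable ⟨S.r, hrc⟩ ⟨v, hvc⟩ := by
    intro n
    induction n with
    | zero =>
      intro v hvc hd
      by_cases hv : v = S.r
      · subst hv; rfl
      · exfalso
        have := S.hdep v (hmemQ v) hv
        omega
    | succ n ihn =>
      intro v hvc hd
      by_cases hv : v = S.r
      · subst hv; rfl
      · have hpc : S.par v ∈ center := ⟨v, hv, rfl⟩
        have hdp := S.hdep v (hmemQ v) hv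
        have hr1 := ihn (S.par v) hpc (by omega)
        have hadj : (G.induce center).Adj ⟨S.par v, hpc⟩ ⟨v, hvc⟩ :=
          S.hadj v (hmemQ v) hv
        exact hr1.trans hadj.reachable
  have hconn : (G.induce center).Connected := by
    rw [SimpleGraph.connected_iff]
    refine ⟨?_, ⟨⟨S.r, hrc⟩⟩⟩
    intro a b
    exact (hreach (S.dep a.1) a.1 a.2 le_rfl).symm.trans (hreach (S.dep b.1) b.1 b.2 le_rfl)
  -- leaves are not in the center
  have hLf_not_center : ∀ l ∈ S.Lf, l ∉ center := by
    intro l hl hlc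
    obtain ⟨w, hwr, hwp⟩ := hlc
    exact (S.mem_Lf_iff.mp hl).2 ⟨w, hmemQ w, hwr, hwp⟩
  have hrLf : S.r ∉ S.Lf := fun h => hLf_not_center S.r h hrc
  -- choose k leaves
  obtain ⟨t, htsub, htcard⟩ := Finset.exists_subset_card_eq hk
  set e := Finset.equivFinOfCardEq htcard with he
  set f : Fin k → V := fun i => ((e.symm i : {x // x ∈ t}) : V) with hf
  have hfinj : Function.Injective f := by
    intro i j hij
    apply e.symm.injective
    exact Subtype.ext hij
  have hfLf : ∀ i, f i ∈ S.Lf := fun i => htsub (e.symm i).2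
  -- assemble the minor
  refine ⟨fun i => Fin.cases center (fun j => {f j}) i, ?_, ?_, ?_, ?_⟩
  · intro i
    induction i using Fin.cases with
    | zero => exact ⟨S.r, hrc⟩
    | succ j => exact ⟨f j, rfl⟩
  · intro i
    induction i using Fin.cases with
    | zero => exact hconn
    | succ j => exact singleton_induce_connected _
  · intro i j hij
    induction i using Fin.cases with
    | zero =>
      induction j using Fin.cases with
      | zero => exact absurd rfl hij
      | succ j' => exact Set.disjoint_singleton_right.mpr (hLf_not_center _ (hfLf _))
    | succ j0 =>
      induction j using Fin.cases with
      | zero => exact (Set.disjoint_singleton_right.mpr (hLf_not_center _ (hfLf _))).symm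
      | succ j' =>
        have : Disjoint ({f j0} : Set V) {f j'} := by
          rw [Set.disjoint_singleton_left, Set.mem_singleton_iff]
          intro hcontra
          exact hij (congrArg Fin.succ (hfinj hcontra))
        exact this
  · intro i hi
    induction i using Fin.cases with
    | zero => exact absurd rfl hi
    | succ j =>
      have hlLf : f j ∈ S.Lf := hfLf _
      have hlr : f j ≠ S.r := fun h => hrLf (h ▸ hlLf)
      exact ⟨S.par (f j), ⟨f j, hlr, rfl⟩, f j, rfl, S.hadj (f j) (hmemQ (f j)) hlr⟩

lemma DS_le (hG : G.Connected) {k : ℕ} (hk1 : 1 ≤ k) (hV : 2 ≤ Fintype.card V)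
    (hns : ¬ G.HasStarMinor k) : DS G + 5 ≤ 4 * k := by
  obtain ⟨S', hQ, hb⟩ := main_bound hG hV
  have hLfk : S'.Lf.card ≤ k - 1 := by
    by_contra h
    push_neg at h
    exact hns (star_of_spanning S' hQ k (by omega) hV)
  omega

lemma closed_mem_tail {v x : V} (c : G.Walk v v) (hnn : ¬ c.Nil) :
    x ∈ c.support ↔ x ∈ c.support.tail := by
  obtain ⟨u, h, q, rfl⟩ := SimpleGraph.Walk.not_nil_iff.mp hnn
  rw [SimpleGraph.Walk.support_cons]
  simp only [List.tail_cons, List.mem_cons]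
  constructor
  · rintro (rfl | h2)
    · exact q.end_mem_support
    · exact h2
  · exact Or.inr

lemma rotate_mem {v u x : V} (c : G.Walk v v) (hc : c.IsCycle) (hu : u ∈ c.support) :
    (x ∈ (c.rotate u hu).support ↔ x ∈ c.support) := by
  have h1 : ¬ c.Nil := by
    rw [SimpleGraph.Walk.not_nil_iff_lt_length]
    have := hc.three_le_length; omega
  have h2 : ¬ (c.rotate u hu).Nil := by
    rw [SimpleGraph.Walk.not_nil_iff_lt_length]
    have := (hc.rotate hu).three_le_length; omega
  rw [closed_mem_tail _ h2, closed_mem_tail _ h1]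
  exact (SimpleGraph.Walk.support_rotate c u hu).mem_iff

lemma cycle_two_nbrs {a : V} (d : G.Walk a a) (hd : d.IsCycle) :
    ∃ n1 n2, n1 ≠ n2 ∧ n1 ∈ d.support ∧ n2 ∈ d.support ∧ G.Adj a n1 ∧ G.Adj a n2 := by
  have hlen := hd.three_le_length
  have hnn : ¬ d.Nil := by rw [SimpleGraph.Walk.not_nil_iff_lt_length]; omega
  obtain ⟨b, hab, p, rfl⟩ := SimpleGraph.Walk.not_nil_iff.mp hnn
  have hp : p.IsPath := ((SimpleGraph.Walk.cons_isCycle_iff p hab).mp hd).1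
  have hplen : 2 ≤ p.length := by
    rw [SimpleGraph.Walk.length_cons] at hlen; omega
  have hqnn : ¬ p.reverse.Nil := by
    rw [SimpleGraph.Walk.not_nil_iff_lt_length, SimpleGraph.Walk.length_reverse]; omega
  obtain ⟨c, hac, q, hq⟩ := SimpleGraph.Walk.not_nil_iff.mp hqnn
  refine ⟨b, c, ?_, ?_, ?_, hab, hac⟩
  · rintro rfl
    have hpr : p.reverse.IsPath := hp.reverse
    rw [hq, SimpleGraph.Walk.cons_isPath_iff] at hpr
    have hqp : q.IsPath := hpr.1
    have hqlen : 1 ≤ q.length := by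
      have hlr2 : p.reverse.length = p.length := SimpleGraph.Walk.length_reverse p
      rw [hq, SimpleGraph.Walk.length_cons] at hlr2
      omega
    have hqnn2 : ¬ q.Nil := by rw [SimpleGraph.Walk.not_nil_iff_lt_length]; omega
    obtain ⟨z, hbz, q2, rfl⟩ := SimpleGraph.Walk.not_nil_iff.mp hqnn2
    rw [SimpleGraph.Walk.cons_isPath_iff] at hqp
    exact hqp.2 q2.end_mem_support
  · rw [SimpleGraph.Walk.support_cons]
    exact List.mem_cons_of_mem _ p.start_mem_support
  · have hcp : c ∈ p.reverse.support := by
      rw [hq, SimpleGraph.Walk.support_cons]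
      exact List.mem_cons_of_mem _ q.start_mem_support
    rw [SimpleGraph.Walk.support_reverse, List.mem_reverse] at hcp
    rw [SimpleGraph.Walk.support_cons]
    exact List.mem_cons_of_mem _ hcp

lemma cycle_support_univ (hG : G.Connected) {a : V} (d : G.Walk a a) (hd : d.IsCycle)
    (hdeg : ∀ u ∈ d.support, (G.neighborFinset u).card ≤ 2) (w : V) : w ∈ d.support := by
  by_contra hw
  obtain ⟨p⟩ := hG.preconnected a w
  obtain ⟨dt, _, hd1, hd2⟩ := p.exists_boundary_dart {x | x ∈ d.support}
    (by exact d.start_mem_support) (by exact hw)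
  have huS : dt.toProd.1 ∈ d.support := hd1
  have hz : dt.toProd.2 ∉ d.support := hd2
  obtain ⟨n1, n2, h12, hn1, hn2, ha1, ha2⟩ := cycle_two_nbrs (d.rotate _ huS) (hd.rotate huS)
  rw [rotate_mem d hd huS] at hn1 hn2
  have hzn1 : dt.toProd.2 ≠ n1 := fun h => hz (h ▸ hn1)
  have hzn2 : dt.toProd.2 ≠ n2 := fun h => hz (h ▸ hn2)
  have hsub : ({n1, n2, dt.toProd.2} : Finset V) ⊆ G.neighborFinset dt.toProd.1 := by
    intro z hz2
    simp only [Finset.mem_insert, Finset.mem_singleton] at hz2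
    rcases hz2 with rfl | rfl | rfl
    · exact (G.mem_neighborFinset _ _).mpr ha1
    · exact (G.mem_neighborFinset _ _).mpr ha2
    · exact (G.mem_neighborFinset _ _).mpr dt.adj
  have hcard : ({n1, n2, dt.toProd.2} : Finset V).card = 3 := by
    rw [Finset.card_insert_of_notMem, Finset.card_insert_of_notMem, Finset.card_singleton]
    · simp only [Finset.mem_singleton]
      exact fun h => hzn2 h.symm
    · simp only [Finset.mem_insert, Finset.mem_singleton]
      push_neg
      exact ⟨h12, fun h => hzn1 h.symm⟩
  have h1 := Finset.card_le_card hsub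
  have h2 := hdeg dt.toProd.1 huS
  omega

lemma induce_nbhd_le (X : Set V) (v : ↥X) :
    ((G.induce X).neighborSet v).ncard ≤ (G.neighborFinset (v : V)).card := by
  have hsub : Subtype.val '' ((G.induce X).neighborSet v) ⊆ ↑(G.neighborFinset (v : V)) := by
    rintro z ⟨w, hw, rfl⟩
    have : G.Adj (v : V) (w : V) := hw
    rw [Finset.mem_coe]
    exact (G.mem_neighborFinset _ _).mpr this
  have h1 : ((G.induce X).neighborSet v).ncard
      = (Subtype.val '' ((G.induce X).neighborSet v)).ncard :=
    (Set.ncard_image_of_injective _ Subtype.val_injective).symm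
  rw [h1, ← Set.ncard_coe_finset]
  exact Set.ncard_le_ncard hsub (Finset.finite_toSet _)

lemma linear_forest_criterion (X : Set V)
    (hdeg : ∀ v : V, v ∉ X → (G.neighborFinset v).card ≤ 2)
    (hcyc : ∀ (a : V) (d : G.Walk a a), d.IsCycle → (∀ u ∈ d.support, u ∉ X) → False) :
    (G.induce Xᶜ).IsLinearForest := by
  constructor
  · intro v c hc
    have hinj : Function.Injective ((SimpleGraph.Embedding.induce (G := G) Xᶜ).toHom : ↥Xᶜ → V) :=
      Subtype.val_injective
    have hcm : (c.map (SimpleGraph.Embedding.induce (G := G) Xᶜ).toHom).IsCycle :=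
      (SimpleGraph.Walk.map_isCycle_iff_of_injective hinj).mpr hc
    refine hcyc _ _ hcm ?_
    intro u hu
    rw [SimpleGraph.Walk.support_map, List.mem_map] at hu
    obtain ⟨w, _, rfl⟩ := hu
    exact w.2
  · intro v
    calc ((G.induce Xᶜ).neighborSet v).ncard ≤ (G.neighborFinset (v : V)).card :=
        induce_nbhd_le _ v
      _ ≤ 2 := hdeg _ v.2

end StarAux

/-- a simple connected graph with no `K_{1,k}` minor has a linearizing
set of at most `4k` vertices. -/
theorem linearizingSet_of_no_star_minor {V : Type*} [Fintype V] (G : SimpleGraph V) (k : ℕ)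
    (hc : G.Connected) (h : ¬ G.HasStarMinor k) :
    ∃ X : Set V, X.ncard ≤ 4 * k ∧ (G.induce Xᶜ).IsLinearForest := by
  classical
  obtain ⟨v₀⟩ : Nonempty V := hc.nonempty
  rcases Nat.eq_zero_or_pos k with hk0 | hk1
  · subst hk0
    exact absurd ⟨fun _ => {v₀}, fun i => ⟨v₀, rfl⟩,
      fun i => StarAux.singleton_induce_connected _,
      fun i j hij => absurd ((Fin.fin_one_eq_zero i).trans (Fin.fin_one_eq_zero j).symm) hij,
      fun i hi => absurd (Fin.fin_one_eq_zero i) hi⟩ h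
  by_cases hsmall : Fintype.card V ≤ 4 * k
  · refine ⟨Set.univ, ?_, ?_⟩
    · rw [Set.ncard_univ, Nat.card_eq_fintype_card]; exact hsmall
    · apply StarAux.linear_forest_criterion
      · intro v hv; exact absurd (Set.mem_univ v) hv
      · intro a d hdc hall
        exact hall a d.start_mem_support (Set.mem_univ a)
  · push_neg at hsmall
    have hV2 : 2 ≤ Fintype.card V := by omega
    have hDS := StarAux.DS_le hc hk1 hV2 h
    by_cases hD : (Finset.univ.filter (StarAux.DB G)) = ∅
    · have hdeg2 : ∀ v : V, (G.neighborFinset v).card ≤ 2 := by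
        intro v
        by_contra hv
        have hmem : v ∈ Finset.univ.filter (StarAux.DB G) :=
          Finset.mem_filter.mpr ⟨Finset.mem_univ v, by unfold StarAux.DB; omega⟩
        rw [hD] at hmem
        exact Finset.notMem_empty v hmem
      by_cases hacyc : G.IsAcyclic
      · refine ⟨∅, by simp, StarAux.linear_forest_criterion _ (fun v _ => hdeg2 v) ?_⟩
        intro a d hdc _
        exact hacyc d hdc
      · obtain ⟨a₀, d₀, hd₀⟩ : ∃ (a₀ : V) (d₀ : G.Walk a₀ a₀), d₀.IsCycle := by
          unfold SimpleGraph.IsAcyclic at hacyc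
          push_neg at hacyc
          obtain ⟨v, c, hcyc⟩ := hacyc
          exact ⟨v, c, hcyc⟩
        refine ⟨{a₀}, ?_, StarAux.linear_forest_criterion _ (fun v _ => hdeg2 v) ?_⟩
        · rw [Set.ncard_singleton]; omega
        · intro a d hdc hall
          have hmem := StarAux.cycle_support_univ hc d hdc (fun u _ => hdeg2 u) a₀
          exact hall a₀ hmem rfl
    · refine ⟨↑(Finset.univ.filter (StarAux.DB G)), ?_, StarAux.linear_forest_criterion _ ?_ ?_⟩
      · rw [Set.ncard_coe_finset]
        have hrfl : (Finset.univ.filter (StarAux.DB G)).card = StarAux.GSt.DS G := rfl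
        omega
      · intro v hv
        have h2 : ¬ StarAux.DB G v := fun hdb =>
          hv (Finset.mem_coe.mpr (Finset.mem_filter.mpr ⟨Finset.mem_univ v, hdb⟩))
        unfold StarAux.DB at h2
        omega
      · intro a d hdc hall
        have hdeg : ∀ u ∈ d.support, (G.neighborFinset u).card ≤ 2 := by
          intro u hu
          have h3 := hall u hu
          have h2 : ¬ StarAux.DB G u := fun hdb =>
            h3 (Finset.mem_coe.mpr (Finset.mem_filter.mpr ⟨Finset.mem_univ u, hdb⟩))
          unfold StarAux.DB at h2
          omega
        obtain ⟨b, hb⟩ := Finset.nonempty_iff_ne_empty.mpr hD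
        have hbs := StarAux.cycle_support_univ hc d hdc hdeg b
        exact hall b hbs (Finset.mem_coe.mpr hb)
end

section
/- For all integers d, a, w, p there exists an integer n such that: if every d-edge-connected subset of V(G) is (a,w,p)-linear, then G does not contain K_n as a strong immersion. In fact n = max{2w+2, (2p+1)a+1, d+1} suffices. -/
open scoped Classical

namespace Multigraph

variable {V E : Type*}

lemma Walk.start_mem_support' {G : Multigraph V E} :
    ∀ {u v : V} (p : G.Walk u v), u ∈ p.support
  | _, _, .nil _ => List.mem_singleton_self _
  | _, _, .cons _ _ _ _ => List.mem_cons_self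
  | _, _, .cons' _ _ _ _ => List.mem_cons_self

lemma exists_cut_edge {G : Multigraph V E} {L R : Set V} {C : Set E}
    (hC : ∀ e, (G.src e ∈ L ∧ G.tgt e ∈ R) ∨ (G.src e ∈ R ∧ G.tgt e ∈ L) → e ∈ C)
    {u v : V} (pw : G.Walk u v) :
    (∀ z ∈ pw.support, z ∉ L → z ∈ R) → u ∈ L → v ∉ L →
      ∃ e ∈ pw.edges, e ∈ C := by
  induction pw with
  | nil x => exact fun _ hu hv => absurd hu hv
  | cons e hs ht rest ih =>
    rename_i u₁ v₁ w₁
    intro hcov hu hv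
    by_cases hm : v₁ ∈ L
    · obtain ⟨f, hf, hfC⟩ := ih (fun z hz => hcov z (List.mem_cons_of_mem _ hz)) hm hv
      exact ⟨f, List.mem_cons_of_mem _ hf, hfC⟩
    · have hmR : v₁ ∈ R := hcov v₁ (List.mem_cons_of_mem _ rest.start_mem_support') hm
      exact ⟨e, List.mem_cons_self,
        hC e (Or.inl ⟨by rw [hs]; exact hu, by rw [ht]; exact hmR⟩)⟩
  | cons' e hs ht rest ih =>
    rename_i u₁ v₁ w₁
    intro hcov hu hv
    by_cases hm : v₁ ∈ L
    · obtain ⟨f, hf, hfC⟩ := ih (fun z hz => hcov z (List.mem_cons_of_mem _ hz)) hm hv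
      exact ⟨f, List.mem_cons_of_mem _ hf, hfC⟩
    · have hmR : v₁ ∈ R := hcov v₁ (List.mem_cons_of_mem _ rest.start_mem_support') hm
      exact ⟨e, List.mem_cons_self,
        hC e (Or.inr ⟨by rw [hs]; exact hmR, by rw [ht]; exact hu⟩)⟩

lemma exists_cut_edge_pair {G : Multigraph V E} {L R : Set V} {C : Set E}
    (hC : ∀ e, (G.src e ∈ L ∧ G.tgt e ∈ R) ∨ (G.src e ∈ R ∧ G.tgt e ∈ L) → e ∈ C)
    {u v : V} (pw : G.Walk u v)
    (hcov : ∀ z ∈ pw.support, z ∈ L ∪ R)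
    (hdisj : ∀ z, z ∈ L → z ∈ R → False)
    (hor : (u ∈ L ∧ v ∈ R) ∨ (u ∈ R ∧ v ∈ L)) :
    ∃ e ∈ pw.edges, e ∈ C := by
  rcases hor with ⟨hu, hv⟩ | ⟨hu, hv⟩
  · exact exists_cut_edge hC pw (fun z hz hzL => (hcov z hz).resolve_left hzL) hu
      (fun hvL => hdisj v hvL hv)
  · exact exists_cut_edge (L := R) (R := L) (fun e hh => hC e hh.symm) pw
      (fun z hz hzR => (hcov z hz).resolve_right hzR) hu (fun hvR => hdisj v hv hvR)

lemma exists_nbhd_start {G : Multigraph V E} :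
    ∀ {u v : V} (pw : G.Walk u v), u ≠ v → ∃ z ∈ G.nbhd u, z ∈ pw.support := by
  intro u v pw
  induction pw with
  | nil x => exact fun hne => absurd rfl hne
  | cons e hs ht rest ih =>
    rename_i u₁ v₁ w₁
    intro hne
    by_cases hm : v₁ = u₁
    · subst hm
      obtain ⟨z, hz, hzs⟩ := ih hne
      exact ⟨z, hz, List.mem_cons_of_mem _ hzs⟩
    · exact ⟨v₁, ⟨hm, e, Or.inl ⟨hs, ht⟩⟩, List.mem_cons_of_mem _ rest.start_mem_support'⟩
  | cons' e hs ht rest ih =>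
    rename_i u₁ v₁ w₁
    intro hne
    by_cases hm : v₁ = u₁
    · subst hm
      obtain ⟨z, hz, hzs⟩ := ih hne
      exact ⟨z, hz, List.mem_cons_of_mem _ hzs⟩
    · exact ⟨v₁, ⟨hm, e, Or.inr ⟨hs, ht⟩⟩, List.mem_cons_of_mem _ rest.start_mem_support'⟩

lemma exists_nbhd_end {G : Multigraph V E} :
    ∀ {u v : V} (pw : G.Walk u v), u ≠ v → ∃ z ∈ G.nbhd v, z ∈ pw.support := by
  intro u v pw
  induction pw with
  | nil x => exact fun hne => absurd rfl hne
  | cons e hs ht rest ih =>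
    rename_i u₁ v₁ w₁
    intro hne
    by_cases hm : v₁ = w₁
    · subst hm
      exact ⟨u₁, ⟨hne, e, Or.inr ⟨hs, ht⟩⟩, List.mem_cons_self⟩
    · obtain ⟨z, hz, hzs⟩ := ih hm
      exact ⟨z, hz, List.mem_cons_of_mem _ hzs⟩
  | cons' e hs ht rest ih =>
    rename_i u₁ v₁ w₁
    intro hne
    by_cases hm : v₁ = w₁
    · subst hm
      exact ⟨u₁, ⟨hne, e, Or.inl ⟨hs, ht⟩⟩, List.mem_cons_self⟩
    · obtain ⟨z, hz, hzs⟩ := ih hm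
      exact ⟨z, hz, List.mem_cons_of_mem _ hzs⟩

lemma exists_nbhd_of_endpoint {G : Multigraph V E} {u v x : V} (pw : G.Walk u v)
    (hx : x = u ∨ x = v) (hne : u ≠ v) : ∃ z ∈ G.nbhd x, z ∈ pw.support := by
  rcases hx with rfl | rfl
  · exact exists_nbhd_start pw hne
  · exact exists_nbhd_end pw hne

/-- The edge of `completeMG n` on two distinct vertices. -/
def mkEdge {n : ℕ} (α β : Fin n) (hne : α ≠ β) : {q : Fin n × Fin n // q.1 < q.2} :=
  if hlt : α < β then ⟨(α, β), hlt⟩ else ⟨(β, α), hne.lt_or_gt.resolve_left hlt⟩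

lemma mkEdge_cases {n : ℕ} (α β : Fin n) (hne : α ≠ β) :
    (mkEdge α β hne).1 = (α, β) ∨ (mkEdge α β hne).1 = (β, α) := by
  unfold mkEdge; split_ifs <;> simp

lemma card_le_ncard_target {ι α : Type*} [Fintype ι] {C : Set α} (hfin : C.Finite)
    (f : ι → α) (hinj : Function.Injective f) (hmem : ∀ i, f i ∈ C) :
    Fintype.card ι ≤ C.ncard := by
  have h1 : Set.range f ⊆ C := Set.range_subset_iff.mpr hmem
  have h2 : (Set.range f).ncard = Fintype.card ι := by
    rw [← Set.image_univ, Set.ncard_image_of_injective _ hinj, Set.ncard_univ,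
      Nat.card_eq_fintype_card]
  exact h2 ▸ Set.ncard_le_ncard h1 hfin

end Multigraph

set_option maxHeartbeats 1000000 in
/-- with `n = max {2w+2, (2p+1)a+1, d+1}`, if every `d`-edge-connected subset
of `V(G)` is `(a,w,p)`-linear, then `G` contains no strong immersion of `K_n`. -/
theorem no_clique_immersion_of_linear {V E : Type*} [Fintype V] [Fintype E]
    (d a w p : ℕ) (G : Multigraph V E)
    (h : ∀ W : Set V, G.EdgeConnSet d W → Multigraph.Linear G W a w p) :
    ¬ Multigraph.StrongImmersion
        (Multigraph.completeMG (max (2 * w + 2) (max ((2 * p + 1) * a + 1) (d + 1)))) G := by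
  set n := max (2 * w + 2) (max ((2 * p + 1) * a + 1) (d + 1)) with hn
  have hn1 : 2 * w + 2 ≤ n := le_max_left _ _
  have hn2 : (2 * p + 1) * a + 1 ≤ n := le_trans (le_max_left _ _) (le_max_right _ _)
  have hn3 : d + 1 ≤ n := le_trans (le_max_right _ _) (le_max_right _ _)
  rintro ⟨imm⟩
  set W : Set V := Set.range imm.vmap with hWdef
  -- Step 1: W is d-edge-connected
  have hmain : ∀ S : Set V, (G.cutEdges S).ncard < d →
      ∀ α β : Fin n, imm.vmap α ∈ S → imm.vmap β ∉ S → False := by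
    intro S hS α β hα hβ
    have hαβ : α ≠ β := fun hEq => hβ (hEq ▸ hα)
    have step : ∀ γ : Fin n, γ ≠ β → ∃ e ∈ G.cutEdges S,
        ∃ kk : {q : Fin n × Fin n // q.1 < q.2}, e ∈ (imm.path kk).edges ∧
          ((kk.1 = (γ, β) ∨ kk.1 = (β, γ)) ∨ (kk.1 = (α, γ) ∨ kk.1 = (γ, α))) := by
      intro γ hγβ
      by_cases hγ : imm.vmap γ ∈ S
      · have hcases := Multigraph.mkEdge_cases γ β hγβ
        set kk := Multigraph.mkEdge γ β hγβ with hkkdef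
        have hor : (imm.vmap ((Multigraph.completeMG n).src kk) ∈ S ∧
              imm.vmap ((Multigraph.completeMG n).tgt kk) ∈ Sᶜ) ∨
            (imm.vmap ((Multigraph.completeMG n).src kk) ∈ Sᶜ ∧
              imm.vmap ((Multigraph.completeMG n).tgt kk) ∈ S) := by
          rcases hcases with hc | hc
          · left
            refine ⟨?_, ?_⟩
            · show imm.vmap kk.1.1 ∈ S; rw [hc]; exact hγ
            · show imm.vmap kk.1.2 ∈ Sᶜ; rw [hc]; exact hβ
          · right
            refine ⟨?_, ?_⟩
            · show imm.vmap kk.1.1 ∈ Sᶜ; rw [hc]; exact hβ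
            · show imm.vmap kk.1.2 ∈ S; rw [hc]; exact hγ
        obtain ⟨e, he, heC⟩ := Multigraph.exists_cut_edge_pair (L := S) (R := Sᶜ)
          (C := G.cutEdges S) (fun e hh => hh) (imm.path kk)
          (fun z _ => by
            by_cases hz : z ∈ S
            · exact Or.inl hz
            · exact Or.inr hz)
          (fun z h1 h2 => h2 h1) hor
        exact ⟨e, heC, kk, he, Or.inl hcases⟩
      · have hγα : α ≠ γ := fun hEq => hγ (hEq ▸ hα)
        have hcases := Multigraph.mkEdge_cases α γ hγα
        set kk := Multigraph.mkEdge α γ hγα with hkkdef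
        have hor : (imm.vmap ((Multigraph.completeMG n).src kk) ∈ S ∧
              imm.vmap ((Multigraph.completeMG n).tgt kk) ∈ Sᶜ) ∨
            (imm.vmap ((Multigraph.completeMG n).src kk) ∈ Sᶜ ∧
              imm.vmap ((Multigraph.completeMG n).tgt kk) ∈ S) := by
          rcases hcases with hc | hc
          · left
            refine ⟨?_, ?_⟩
            · show imm.vmap kk.1.1 ∈ S; rw [hc]; exact hα
            · show imm.vmap kk.1.2 ∈ Sᶜ; rw [hc]; exact hγ
          · right
            refine ⟨?_, ?_⟩
            · show imm.vmap kk.1.1 ∈ Sᶜ; rw [hc]; exact hγ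
            · show imm.vmap kk.1.2 ∈ S; rw [hc]; exact hα
        obtain ⟨e, he, heC⟩ := Multigraph.exists_cut_edge_pair (L := S) (R := Sᶜ)
          (C := G.cutEdges S) (fun e hh => hh) (imm.path kk)
          (fun z _ => by
            by_cases hz : z ∈ S
            · exact Or.inl hz
            · exact Or.inr hz)
          (fun z h1 h2 => h2 h1) hor
        exact ⟨e, heC, kk, he, Or.inr hcases⟩
    choose ef hef kkf hkf hpf using fun γp : {γ : Fin n // γ ≠ β} => step γp.1 γp.2
    have hinj : Function.Injective ef := by
      intro γp γp' hff
      by_contra hne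
      have hne1 : (γp.1 : ℕ) ≠ (γp'.1 : ℕ) :=
        fun hh => hne (Subtype.ext (Fin.val_injective hh))
      have hb1 : (γp.1 : ℕ) ≠ (β : ℕ) := fun hh => γp.2 (Fin.val_injective hh)
      have hb2 : (γp'.1 : ℕ) ≠ (β : ℕ) := fun hh => γp'.2 (Fin.val_injective hh)
      have hab : (α : ℕ) ≠ (β : ℕ) := fun hh => hαβ (Fin.val_injective hh)
      have hkkne : kkf γp ≠ kkf γp' := by
        intro hEq
        have hpair : (kkf γp).1 = (kkf γp').1 := by rw [hEq]
        rcases hpf γp with hc | hc <;> rcases hpf γp' with hc' | hc' <;>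
          rcases hc with hc | hc <;> rcases hc' with hc' | hc' <;>
          rw [hc, hc'] at hpair <;> simp only [Prod.mk.injEq, Fin.ext_iff] at hpair <;>
          omega
      exact imm.edisj _ _ hkkne (ef γp) (hkf γp) (by rw [hff]; exact hkf γp')
    have hcard : Fintype.card {γ : Fin n // γ ≠ β} ≤ (G.cutEdges S).ncard :=
      Multigraph.card_le_ncard_target (Set.toFinite _) ef hinj hef
    have hcard2 : Fintype.card {γ : Fin n // γ ≠ β} = n - 1 := by
      have hc := Fintype.card_subtype_compl (fun γ : Fin n => γ = β)
      rw [Fintype.card_subtype_eq, Fintype.card_fin] at hc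
      exact hc
    omega
  have hconn : G.EdgeConnSet d W := by
    intro S hS x hx y hy
    obtain ⟨α, rfl⟩ := hx
    obtain ⟨β, rfl⟩ := hy
    constructor
    · intro hxS; by_contra hyS; exact hmain S hS α β hxS hyS
    · intro hyS; by_contra hxS; exact hmain S hS β α hyS hxS
  obtain ⟨A, hAW, hAa, P, hwidth, hbound⟩ := h W hconn
  have hordX : ∀ j : Fin P.t, P.ord j ∈ W \ A := by
    intro j
    have h0 : P.ord j ∈ Set.range P.ord := ⟨j, rfl⟩
    rwa [P.ord_range] at h0
  have hAX : ∀ v : V, v ∈ A → v ∉ Set.range P.ord := by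
    intro v hv hr; rw [P.ord_range] at hr; exact hr.2 hv
  choose δf hδf using fun j : Fin P.t => (hordX j).1
  have hδinj : Function.Injective δf := fun j j' hEq => P.ord_inj (by
    rw [← hδf, ← hδf, hEq])
  -- support of a path between branch vertices meets W only in its ends
  have hsuppW : ∀ (δ₁ δ₂ : Fin n) (kk : {q : Fin n × Fin n // q.1 < q.2}),
      (kk.1 = (δ₁, δ₂) ∨ kk.1 = (δ₂, δ₁)) →
      ∀ z ∈ (imm.path kk).support, z ∈ W → z = imm.vmap δ₁ ∨ z = imm.vmap δ₂ := by
    intro δ₁ δ₂ kk hkk z hz hzW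
    obtain ⟨μ, rfl⟩ := hzW
    by_contra hcon
    push_neg at hcon
    obtain ⟨h1, h2⟩ := hcon
    have hμ1 : μ ≠ δ₁ := fun hEq => h1 (by rw [hEq])
    have hμ2 : μ ≠ δ₂ := fun hEq => h2 (by rw [hEq])
    have hsrc : μ ≠ (Multigraph.completeMG n).src kk := by
      show μ ≠ kk.1.1
      rcases hkk with hc | hc <;> rw [hc]
      · exact hμ1
      · exact hμ2
    have htgt : μ ≠ (Multigraph.completeMG n).tgt kk := by
      show μ ≠ kk.1.2
      rcases hkk with hc | hc <;> rw [hc]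
      · exact hμ2
      · exact hμ1
    exact imm.avoid kk μ hsrc htgt hz
  -- covering and disjointness for cuts of the decomposition
  have hcover : ∀ (i : Fin P.t) (z : V), z ∉ A → z ≠ P.ord i →
      z ∈ P.leftSet i ∪ P.rightSet i := by
    intro i z hzA hzo
    by_cases hzX : z ∈ Set.range P.ord
    · obtain ⟨j, rfl⟩ := hzX
      have hji : j ≠ i := fun hEq => hzo (by rw [hEq])
      rcases lt_or_gt_of_ne hji with hlt | hgt
      · exact Or.inl (Or.inl ⟨j, hlt, rfl⟩)
      · exact Or.inr (Or.inl ⟨j, hgt, rfl⟩)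
    · have hz : z ∈ ⋃ j, P.bag j := by
        rw [P.bag_union]
        exact ⟨hzA, by rwa [P.ord_range] at hzX⟩
      obtain ⟨j, hj⟩ := Set.mem_iUnion.mp hz
      rcases le_or_gt (j : ℕ) (i : ℕ) with hle | hgt
      · exact Or.inl (Or.inr (Set.mem_iUnion₂.mpr ⟨j, hle, hj⟩))
      · exact Or.inr (Or.inr (Set.mem_iUnion₂.mpr ⟨j, hgt, hj⟩))
  have hbag_not_ord : ∀ (j' : Fin (P.t + 1)) (j : Fin P.t), P.ord j ∉ P.bag j' := by
    intro j' j hmem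
    have hin : P.ord j ∈ ⋃ j'', P.bag j'' := Set.mem_iUnion.mpr ⟨j', hmem⟩
    rw [P.bag_union] at hin
    exact hin.2 (hordX j)
  have hdisjLR : ∀ (i : Fin P.t) (z : V), z ∈ P.leftSet i → z ∈ P.rightSet i → False := by
    intro i z hL hR
    rcases hL with ⟨j, hj, rfl⟩ | hL
    · rcases hR with ⟨j', hj', hEq⟩ | hR
      · have := P.ord_inj hEq
        subst this
        exact lt_asymm hj hj'
      · obtain ⟨j', _, hmem⟩ := Set.mem_iUnion₂.mp hR
        exact hbag_not_ord j' j hmem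
    · rcases hR with ⟨j', hj', hEq⟩ | hR
      · obtain ⟨j'', _, hmem⟩ := Set.mem_iUnion₂.mp hL
        rw [hEq] at hmem
        exact hbag_not_ord j'' j' hmem
      · obtain ⟨j1, hj1, hm1⟩ := Set.mem_iUnion₂.mp hL
        obtain ⟨j2, hj2, hm2⟩ := Set.mem_iUnion₂.mp hR
        have hne : j1 ≠ j2 := by
          intro hEq; rw [hEq] at hj1; omega
        exact Set.disjoint_left.mp (P.bag_disj j1 j2 hne) hm1 hm2
  -- Step 2: P.t ≤ w + 1
  have htw : P.t ≤ w + 1 := by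
    by_contra hcon
    push_neg at hcon
    have hi1lt : 1 < P.t := by omega
    set i1 : Fin P.t := ⟨1, hi1lt⟩ with hi1
    set i0 : Fin P.t := ⟨0, by omega⟩ with hi0
    have step : ∀ m : Fin (P.t - 2), ∃ e ∈ P.cutAt i1,
        ∃ kk : {q : Fin n × Fin n // q.1 < q.2}, e ∈ (imm.path kk).edges ∧
          (kk.1 = (δf i0, δf ⟨m.1 + 2, by omega⟩) ∨
           kk.1 = (δf ⟨m.1 + 2, by omega⟩, δf i0)) := by
      intro m
      set km : Fin P.t := ⟨m.1 + 2, by omega⟩ with hkm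
      have hne0 : δf i0 ≠ δf km := by
        intro hEq
        have hik := hδinj hEq
        rw [hi0, hkm] at hik
        simp only [Fin.mk.injEq] at hik
        omega
      have hcases := Multigraph.mkEdge_cases (δf i0) (δf km) hne0
      set kk := Multigraph.mkEdge (δf i0) (δf km) hne0 with hkkdef
      have hsupp : ∀ z ∈ (imm.path kk).support, z ∈ P.leftSet i1 ∪ P.rightSet i1 := by
        intro z hz
        apply hcover i1 z
        · intro hzA
          have hzW : z ∈ W := hAW hzA
          rcases hsuppW (δf i0) (δf km) kk hcases z hz hzW with rfl | rfl
          · exact hAX _ hzA ⟨i0, (hδf i0).symm⟩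
          · exact hAX _ hzA ⟨km, (hδf km).symm⟩
        · intro hzo
          have hzW : z ∈ W := by rw [hzo, ← hδf i1]; exact ⟨δf i1, rfl⟩
          rcases hsuppW (δf i0) (δf km) kk hcases z hz hzW with h0 | h0
          · have hcontra : P.ord i1 = P.ord i0 := by rw [← hzo, h0]; exact hδf i0
            have hik := P.ord_inj hcontra
            rw [hi0, hi1] at hik
            simp only [Fin.mk.injEq] at hik
            omega
          · have hcontra : P.ord i1 = P.ord km := by rw [← hzo, h0]; exact hδf km
            have hik := P.ord_inj hcontra
            rw [hkm, hi1] at hik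
            simp only [Fin.mk.injEq] at hik
            omega
      have hL : imm.vmap (δf i0) ∈ P.leftSet i1 := by
        rw [hδf i0]
        exact Or.inl ⟨i0, by rw [hi0, hi1]; exact Fin.mk_lt_mk.mpr (by omega), rfl⟩
      have hR : imm.vmap (δf km) ∈ P.rightSet i1 := by
        rw [hδf km]
        exact Or.inl ⟨km, by rw [hkm, hi1]; exact Fin.mk_lt_mk.mpr (by omega), rfl⟩
      have hor : (imm.vmap ((Multigraph.completeMG n).src kk) ∈ P.leftSet i1 ∧
            imm.vmap ((Multigraph.completeMG n).tgt kk) ∈ P.rightSet i1) ∨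
          (imm.vmap ((Multigraph.completeMG n).src kk) ∈ P.rightSet i1 ∧
            imm.vmap ((Multigraph.completeMG n).tgt kk) ∈ P.leftSet i1) := by
        rcases hcases with hc | hc
        · left
          refine ⟨?_, ?_⟩
          · show imm.vmap kk.1.1 ∈ _; rw [hc]; exact hL
          · show imm.vmap kk.1.2 ∈ _; rw [hc]; exact hR
        · right
          refine ⟨?_, ?_⟩
          · show imm.vmap kk.1.1 ∈ _; rw [hc]; exact hR
          · show imm.vmap kk.1.2 ∈ _; rw [hc]; exact hL
      obtain ⟨e, he, heC⟩ := Multigraph.exists_cut_edge_pair (C := P.cutAt i1)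
        (fun e hh => hh) (imm.path kk) hsupp (hdisjLR i1) hor
      exact ⟨e, heC, kk, he, hcases⟩
    choose ef hef kkf hkf hpf using step
    have hinj2 : Function.Injective ef := by
      intro m m' hff
      by_contra hne
      have hv : (m : ℕ) ≠ (m' : ℕ) := fun hh => hne (Fin.val_injective hh)
      have hkkne : kkf m ≠ kkf m' := by
        intro hEq
        have hpair : (kkf m).1 = (kkf m').1 := by rw [hEq]
        rcases hpf m with hc | hc <;> rcases hpf m' with hc' | hc' <;>
          rw [hc, hc'] at hpair
        · have h2 := hδinj (congrArg Prod.snd hpair)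
          simp only [Fin.ext_iff, Fin.val_mk] at h2
          omega
        · have h1 := hδinj (congrArg Prod.fst hpair)
          rw [hi0] at h1
          simp only [Fin.ext_iff, Fin.val_mk] at h1
          omega
        · have h1 := hδinj (congrArg Prod.fst hpair)
          rw [hi0] at h1
          simp only [Fin.ext_iff, Fin.val_mk] at h1
          omega
        · have h1 := hδinj (congrArg Prod.fst hpair)
          simp only [Fin.ext_iff, Fin.val_mk] at h1
          omega
      exact imm.edisj _ _ hkkne (ef m) (hkf m) (by rw [hff]; exact hkf m')
    have hcard := Multigraph.card_le_ncard_target (Set.toFinite _) ef hinj2 hef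
    rw [Fintype.card_fin] at hcard
    have hwi := hwidth i1
    omega
  -- Step 3: cardinalities
  have hWn : W.ncard = n := by
    rw [hWdef, ← Set.image_univ, Set.ncard_image_of_injective _ imm.vinj, Set.ncard_univ,
      Nat.card_eq_fintype_card, Fintype.card_fin]
  have hXt : (W \ A).ncard = P.t := by
    have h0 : (Set.range P.ord).ncard = P.t := by
      rw [← Set.image_univ, Set.ncard_image_of_injective _ P.ord_inj,
        Set.ncard_univ, Nat.card_eq_fintype_card, Fintype.card_fin]
    rw [P.ord_range] at h0
    exact h0
  have hsplit : n ≤ P.t + a := by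
    have h1 : W = (W \ A) ∪ A := (Set.diff_union_of_subset hAW).symm
    have h2 := Set.ncard_union_le (W \ A) A
    rw [← h1, hWn, hXt] at h2
    omega
  have hp0 : p = 0 := by
    by_contra hp
    have h3a : 3 * a ≤ (2 * p + 1) * a := Nat.mul_le_mul_right a (by omega)
    have hn2' : 3 * a + 1 ≤ n := le_trans (Nat.add_le_add_right h3a 1) hn2
    omega
  subst hp0
  have ha1 : a + 1 ≤ n := by omega
  have hAne : A.Nonempty := by
    rw [Set.nonempty_iff_ne_empty]
    intro hAe
    have hWA : (W \ A).ncard = W.ncard := by rw [hAe, Set.diff_empty]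
    omega
  have ht1 : 1 ≤ P.t := by omega
  -- Step 4: the contradiction from a vertex of A
  obtain ⟨v, hvA⟩ := hAne
  obtain ⟨γ, rfl⟩ := hAW hvA
  have hδ0 : imm.vmap (δf ⟨0, ht1⟩) = P.ord ⟨0, ht1⟩ := hδf _
  have hneγ : γ ≠ δf ⟨0, ht1⟩ := by
    intro hEq
    apply hAX _ hvA
    rw [hEq, hδ0]
    exact ⟨_, rfl⟩
  have hcases := Multigraph.mkEdge_cases γ (δf ⟨0, ht1⟩) hneγ
  set kk := Multigraph.mkEdge γ (δf ⟨0, ht1⟩) hneγ with hkkdef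
  have hvne : imm.vmap ((Multigraph.completeMG n).src kk) ≠
      imm.vmap ((Multigraph.completeMG n).tgt kk) := by
    show imm.vmap kk.1.1 ≠ imm.vmap kk.1.2
    rcases hcases with hc | hc <;> rw [hc] <;> intro hh
    · exact hneγ (imm.vinj hh)
    · exact hneγ (imm.vinj hh.symm)
  have hxor : imm.vmap γ = imm.vmap ((Multigraph.completeMG n).src kk) ∨
      imm.vmap γ = imm.vmap ((Multigraph.completeMG n).tgt kk) := by
    rcases hcases with hc | hc
    · left; show _ = imm.vmap kk.1.1; rw [hc]
    · right; show _ = imm.vmap kk.1.2; rw [hc]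
  obtain ⟨z, hznb, hzsupp⟩ := Multigraph.exists_nbhd_of_endpoint (imm.path kk) hxor hvne
  have hbd := hbound _ hvA
  unfold Multigraph.PathLikeDecomp.Bounded at hbd
  have hzero : ((W \ A) ∩ G.nbhd (imm.vmap γ)).ncard = 0 ∧
      Set.ncard {j : Fin (P.t + 1) | (P.bag j ∩ G.nbhd (imm.vmap γ)).Nonempty} = 0 := by
    omega
  have hXemp : (W \ A) ∩ G.nbhd (imm.vmap γ) = ∅ :=
    (Set.ncard_eq_zero (Set.toFinite _)).mp hzero.1
  have hBemp : {j : Fin (P.t + 1) | (P.bag j ∩ G.nbhd (imm.vmap γ)).Nonempty} = ∅ :=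
    (Set.ncard_eq_zero (Set.toFinite _)).mp hzero.2
  by_cases hzW : z ∈ W
  · rcases hsuppW γ (δf ⟨0, ht1⟩) kk hcases z hzsupp hzW with rfl | rfl
    · exact hznb.1 rfl
    · have hin : imm.vmap (δf ⟨0, ht1⟩) ∈ (W \ A) ∩ G.nbhd (imm.vmap γ) := by
        refine ⟨?_, hznb⟩
        rw [hδ0]
        exact hordX _
      rw [hXemp] at hin
      exact hin
  · have hzbag : z ∈ ⋃ j, P.bag j := by
      rw [P.bag_union]
      exact ⟨fun hin => hzW (hAW hin), fun hin => hzW hin.1⟩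
    obtain ⟨j, hj⟩ := Set.mem_iUnion.mp hzbag
    have hin : j ∈ {j : Fin (P.t + 1) | (P.bag j ∩ G.nbhd (imm.vmap γ)).Nonempty} :=
      ⟨z, hj, hznb⟩
    rw [hBemp] at hin
    exact hin
end

section
/- Let G be a graph, W ⊆ V(G), and suppose the set W of size n is α-edge-connected in G. If (T, X) is a tree-cut decomposition of G of adhesion less than α, then there exists a single node t ∈ V(T) whose bag X_t contains all of W. -/
open scoped Classical

/-- an `α`-edge-connected set `W` lies inside a single bag of any tree-cut
decomposition of adhesion less than `α`. -/
theorem edgeConnected_subset_single_bag {V E : Type*} [Fintype V] [Fintype E] {τ : Type*}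
    (G : Multigraph V E) (W : Set V) (n α : ℕ) (hW : W.ncard = n)
    (hconn : G.EdgeConnSet α W) (D : Multigraph.TreeCutDecomp G τ)
    (hadh : D.AdhesionLt α) :
    ∃ t : τ, W ⊆ D.bag t := by
  classical
  rcases W.eq_empty_or_nonempty with hWe | ⟨w, hw⟩
  · obtain ⟨t⟩ := D.tree_isTree.isConnected.nonempty
    exact ⟨t, hWe ▸ Set.empty_subset _⟩
  · refine ⟨D.nodeOf w, fun w' hw' => ?_⟩
    by_contra hnot
    have hmw := D.nodeOf_mem w
    have hmw' := D.nodeOf_mem w'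
    set t := D.nodeOf w with ht
    set t' := D.nodeOf w' with ht'
    clear_value t t'
    have hne : t' ≠ t := fun h => hnot (h ▸ hmw')
    obtain ⟨p0⟩ := D.tree_isTree.isConnected.preconnected t t' 
    obtain ⟨p, hp⟩ := p0.toPath
    cases p with
    | nil => exact hne rfl
    | cons hadj q =>
      rename_i v
      rw [SimpleGraph.Walk.cons_isPath_iff] at hp
      obtain ⟨hq, htq⟩ := hp
      -- w' is on the v-side
      have hq_edges : ∀ e ∈ q.edges, e ∉ ({s(t, v)} : Set (Sym2 τ)) := by
        intro e he hmem
        rw [Set.mem_singleton_iff] at hmem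
        subst hmem
        exact htq (q.fst_mem_support_of_mem_edges he)
      have hreach' : (D.tree.deleteEdges {s(t, v)}).Reachable v t' :=
        ⟨q.toDeleteEdges _ hq_edges⟩
      have hw'S : w' ∈ D.sideVerts t v := by
        simp only [Multigraph.TreeCutDecomp.sideVerts, Set.mem_iUnion]
        exact ⟨t', hreach', hmw'⟩
      -- w is not on the v-side
      have hwS : w ∉ D.sideVerts t v := by
        intro hmem
        simp only [Multigraph.TreeCutDecomp.sideVerts, Set.mem_iUnion] at hmem
        obtain ⟨x, hxr, hxw⟩ := hmem
        have hx : x = t := by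
          by_contra hxt
          exact (D.bag_disj x t hxt).ne_of_mem hxw hmw rfl
        rw [hx] at hxr
        have hbridge : D.tree.IsBridge s(t, v) :=
          SimpleGraph.isAcyclic_iff_forall_adj_isBridge.mp D.tree_isTree.IsAcyclic hadj
        exact hbridge (hxr.symm)
      have := hconn (D.sideVerts t v) (hadh t v hadj) w hw w' hw'
      exact hwS (this.mpr hw'S)
end

section
/- If a graph G admits a strong immersion θ of K_n with branch set W = θ(V(K_n)) ⊆ X_t for some node t of a tree-cut decomposition (T,X) of G, then the torso H of (G,T,X) at t also contains K_n as a strong immersion. -/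
open scoped Classical

namespace Multigraph

variable {V E : Type*}

def Walk.copy {G : Multigraph V E} {u v u' v' : V} (p : G.Walk u v) (hu : u = u') (hv : v = v') :
    G.Walk u' v' := hu ▸ hv ▸ p

lemma Walk.edges_copy {G : Multigraph V E} {u v u' v' : V} (p : G.Walk u v) (hu : u = u')
    (hv : v = v') : (p.copy hu hv).edges = p.edges := by subst hu; subst hv; rfl

lemma Walk.support_copy {G : Multigraph V E} {u v u' v' : V} (p : G.Walk u v) (hu : u = u')
    (hv : v = v') : (p.copy hu hv).support = p.support := by subst hu; subst hv; rfl

namespace TreeCutDecomp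

variable {τ : Type*} {G : Multigraph V E} (D : TreeCutDecomp G τ) (t : τ)

lemma torsoProj_of_mem {v : V} (h : v ∈ D.bag t) : D.torsoProj t v = Sum.inl ⟨v, h⟩ := by
  exact dif_pos h

noncomputable def mapWalk :
    ∀ {u v : V}, G.Walk u v → (D.torso t).Walk (D.torsoProj t u) (D.torsoProj t v)
  | _, _, .nil u => .nil _
  | u, w, .cons (v := v) e hs ht p =>
    if h : ∀ c : D.PeriphComp t,
        ¬ (D.torsoProj t (G.src e) = Sum.inr c ∧ D.torsoProj t (G.tgt e) = Sum.inr c) then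
      .cons (⟨e, h⟩ : D.TorsoE t)
        (by simpa [TreeCutDecomp.torso] using congrArg (D.torsoProj t) hs)
        (by simpa [TreeCutDecomp.torso] using congrArg (D.torsoProj t) ht)
        (mapWalk p)
    else
      (mapWalk p).copy (by
        push_neg at h
        obtain ⟨c, h1, h2⟩ := h
        rw [hs] at h1; rw [ht] at h2
        rw [h1, h2]) rfl
  | u, w, .cons' (v := v) e hs ht p =>
    if h : ∀ c : D.PeriphComp t,
        ¬ (D.torsoProj t (G.src e) = Sum.inr c ∧ D.torsoProj t (G.tgt e) = Sum.inr c) then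
      .cons' (⟨e, h⟩ : D.TorsoE t)
        (by simpa [TreeCutDecomp.torso] using congrArg (D.torsoProj t) hs)
        (by simpa [TreeCutDecomp.torso] using congrArg (D.torsoProj t) ht)
        (mapWalk p)
    else
      (mapWalk p).copy (by
        push_neg at h
        obtain ⟨c, h1, h2⟩ := h
        rw [hs] at h1; rw [ht] at h2
        rw [h2, h1]) rfl

lemma mapWalk_edges_sublist {u v : V} (p : G.Walk u v) :
    ((D.mapWalk t p).edges.map Subtype.val).Sublist p.edges := by
  induction p with
  | nil => simp [mapWalk, Walk.edges]; rfl
  | cons e hs ht p ih =>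
    rw [mapWalk]
    split_ifs with h
    · exact ih.cons₂ e
    · rw [Walk.edges_copy]
      exact ih.cons e
  | cons' e hs ht p ih =>
    rw [mapWalk]
    split_ifs with h
    · exact ih.cons₂ e
    · rw [Walk.edges_copy]
      exact ih.cons e

lemma mapWalk_support {u v : V} (p : G.Walk u v) :
    ∀ x ∈ (D.mapWalk t p).support, ∃ y ∈ p.support, x = D.torsoProj t y := by
  induction p with
  | nil =>
    intro x hx
    simp only [mapWalk, Walk.support, List.mem_singleton] at hx
    exact ⟨_, by simp [Walk.support], hx⟩
  | cons e hs ht p ih =>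
    intro x hx
    rw [mapWalk] at hx
    split_ifs at hx with h
    · simp only [Walk.support, List.mem_cons] at hx
      rcases hx with rfl | hx
      · exact ⟨_, by simp [Walk.support], rfl⟩
      · obtain ⟨y, hy, hxy⟩ := ih x hx
        exact ⟨y, by simp [Walk.support, hy], hxy⟩
    · rw [Walk.support_copy] at hx
      obtain ⟨y, hy, hxy⟩ := ih x hx
      exact ⟨y, by simp [Walk.support, hy], hxy⟩
  | cons' e hs ht p ih =>
    intro x hx
    rw [mapWalk] at hx
    split_ifs at hx with h
    · simp only [Walk.support, List.mem_cons] at hx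
      rcases hx with rfl | hx
      · exact ⟨_, by simp [Walk.support], rfl⟩
      · obtain ⟨y, hy, hxy⟩ := ih x hx
        exact ⟨y, by simp [Walk.support, hy], hxy⟩
    · rw [Walk.support_copy] at hx
      obtain ⟨y, hy, hxy⟩ := ih x hx
      exact ⟨y, by simp [Walk.support, hy], hxy⟩

end TreeCutDecomp

end Multigraph

/-- if `G` admits a strong immersion of `K_n` whose branch set lies in the
bag `X_t` of a tree-cut decomposition, then the torso at `t` also strongly immerses `K_n`. -/
theorem torso_clique_immersion {V E : Type*} {τ : Type*} (G : Multigraph V E) (n : ℕ)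
    (θ : Multigraph.StrongImm (Multigraph.completeMG n) G)
    (D : Multigraph.TreeCutDecomp G τ) (t : τ) (hW : Set.range θ.vmap ⊆ D.bag t) :
    Multigraph.StrongImmersion (Multigraph.completeMG n) (D.torso t) := by
  classical
  have hproj : ∀ i : Fin n, D.torsoProj t (θ.vmap i) =
      Sum.inl ⟨θ.vmap i, hW ⟨i, rfl⟩⟩ := fun i =>
    D.torsoProj_of_mem t (hW ⟨i, rfl⟩)
  refine ⟨⟨fun i => D.torsoProj t (θ.vmap i), ?_, fun e => D.mapWalk t (θ.path e), ?_, ?_, ?_⟩⟩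
  · intro i j hij
    have hij' : D.torsoProj t (θ.vmap i) = D.torsoProj t (θ.vmap j) := hij
    rw [hproj i, hproj j] at hij'
    replace hij := hij'
    exact θ.vinj (congrArg Subtype.val (Sum.inl.inj hij))
  · intro e
    have hsub := D.mapWalk_edges_sublist t (θ.path e)
    have := hsub.nodup (θ.edges_nodup e)
    exact this.of_map Subtype.val
  · intro e f hef x hxe hxf
    have h1 : x.1 ∈ (θ.path e).edges :=
      (D.mapWalk_edges_sublist t (θ.path e)).mem (List.mem_map_of_mem (f := Subtype.val) hxe)
    have h2 : x.1 ∈ (θ.path f).edges :=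
      (D.mapWalk_edges_sublist t (θ.path f)).mem (List.mem_map_of_mem (f := Subtype.val) hxf)
    exact θ.edisj e f hef x.1 h1 h2
  · intro e u hu1 hu2 hmem
    obtain ⟨y, hy, hxy⟩ := D.mapWalk_support t (θ.path e) _ hmem
    have hxy' : D.torsoProj t (θ.vmap u) = D.torsoProj t y := hxy
    rw [hproj u] at hxy'
    replace hxy := hxy'.symm.symm
    have hyt : y ∈ D.bag t := by
      by_contra hyt
      rw [Multigraph.TreeCutDecomp.torsoProj] at hxy
      exact absurd hxy (by simp [hyt])
    rw [D.torsoProj_of_mem t hyt] at hxy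
    have : θ.vmap u = y := congrArg Subtype.val (Sum.inl.inj hxy)
    exact θ.avoid e u hu1 hu2 (this ▸ hy)
end

section
/- Submodularity-style exchange for minimal separators: Let G be a graph, A ⊆ V(G), and x₁,...,x_t an ordering of some vertices of G−A. For 2 ≤ i ≤ t−1, call Z ⊆ V(G)∖A an i-separator if x_i ∉ Z, {x₁,...,x_{i−1}} ⊆ Z, and {x_{i+1},...,x_t} ∩ Z = ∅; let s_i(Z) be the number of edges of G−A with one end in Z and the other in V(G−A)∖(Z∪{x_i}). For each i, let L_i be an i-separator minimizing s_i(L_i) and, subject to that, minimizing |L_i|. Then for all 2 ≤ i < j ≤ t−1 we have L_i ⊊ L_j. -/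
open scoped Classical

namespace Multigraph

/-- `Z` is an `i`-separator (with respect to `A` and the ordering `x₁, …, x_t`). -/
def ISep {V E : Type*} (_G : Multigraph V E) (A : Set V) (x : ℕ → V) (t i : ℕ)
    (Z : Set V) : Prop :=
  (∀ v ∈ Z, v ∉ A) ∧ x i ∉ Z ∧ (∀ j, 1 ≤ j → j < i → x j ∈ Z) ∧
    (∀ j, i < j → j ≤ t → x j ∉ Z)

/-- `s_i(Z)`: the number of edges of `G − A` with one end in `Z` and the other end in
`V(G−A) ∖ (Z ∪ {x_i})`. -/
noncomputable def sepCount {V E : Type*} (G : Multigraph V E) (A : Set V) (x : ℕ → V)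
    (i : ℕ) (Z : Set V) : ℕ :=
  Set.ncard {e : E | G.src e ∉ A ∧ G.tgt e ∉ A ∧
    ((G.src e ∈ Z ∧ G.tgt e ∉ Z ∧ G.tgt e ≠ x i) ∨
     (G.tgt e ∈ Z ∧ G.src e ∉ Z ∧ G.src e ≠ x i))}

end Multigraph


section AuxSubmod

set_option maxHeartbeats 2000000 in
/-- Per-edge submodularity (intersection part). -/
lemma cut_key_inter {V : Type*} {P Q : Set V} {a b u v : V} (hbP : b ∉ P) (haQ : a ∈ Q)
    (h1 : (u ∈ P ∩ Q ∧ v ∉ P ∩ Q ∧ v ≠ a) ∨ (v ∈ P ∩ Q ∧ u ∉ P ∩ Q ∧ u ≠ a))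
    (h2 : (u ∈ P ∪ Q ∧ v ∉ P ∪ Q ∧ v ≠ b) ∨ (v ∈ P ∪ Q ∧ u ∉ P ∪ Q ∧ u ≠ b)) :
    ((u ∈ P ∧ v ∉ P ∧ v ≠ a) ∨ (v ∈ P ∧ u ∉ P ∧ u ≠ a)) ∧
    ((u ∈ Q ∧ v ∉ Q ∧ v ≠ b) ∨ (v ∈ Q ∧ u ∉ Q ∧ u ≠ b)) := by
  have hub : u ∈ P → u ≠ b := fun h he => hbP (he ▸ h)
  have hvb : v ∈ P → v ≠ b := fun h he => hbP (he ▸ h)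
  have hua : u ∉ Q → u ≠ a := fun h he => h (he ▸ haQ)
  have hva : v ∉ Q → v ≠ a := fun h he => h (he ▸ haQ)
  simp only [Set.mem_inter_iff, Set.mem_union, not_and_or, not_or] at h1 h2
  tauto

set_option maxHeartbeats 2000000 in
/-- Per-edge submodularity (union part). -/
lemma cut_key_union {V : Type*} {P Q : Set V} {a b u v : V} (hbP : b ∉ P) (haQ : a ∈ Q)
    (h : ((u ∈ P ∩ Q ∧ v ∉ P ∩ Q ∧ v ≠ a) ∨ (v ∈ P ∩ Q ∧ u ∉ P ∩ Q ∧ u ≠ a)) ∨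
         ((u ∈ P ∪ Q ∧ v ∉ P ∪ Q ∧ v ≠ b) ∨ (v ∈ P ∪ Q ∧ u ∉ P ∪ Q ∧ u ≠ b))) :
    ((u ∈ P ∧ v ∉ P ∧ v ≠ a) ∨ (v ∈ P ∧ u ∉ P ∧ u ≠ a)) ∨
    ((u ∈ Q ∧ v ∉ Q ∧ v ≠ b) ∨ (v ∈ Q ∧ u ∉ Q ∧ u ≠ b)) := by
  have hub : u ∈ P → u ≠ b := fun h he => hbP (he ▸ h)
  have hvb : v ∈ P → v ≠ b := fun h he => hbP (he ▸ h)
  have hua : u ∉ Q → u ≠ a := fun h he => h (he ▸ haQ)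
  have hva : v ∉ Q → v ≠ a := fun h he => h (he ▸ haQ)
  simp only [Set.mem_inter_iff, Set.mem_union, not_and_or, not_or] at h
  tauto

/-- Submodularity of the separator-count function. -/
lemma sepCount_submod {V E : Type*} [Fintype E] (G : Multigraph V E) (A : Set V)
    (x : ℕ → V) (i j : ℕ) (P Q : Set V) (hbP : x j ∉ P) (haQ : x i ∈ Q) :
    Multigraph.sepCount G A x i (P ∩ Q) + Multigraph.sepCount G A x j (P ∪ Q) ≤
      Multigraph.sepCount G A x i P + Multigraph.sepCount G A x j Q := by
  classical
  set S1 : Set E := {e : E | G.src e ∉ A ∧ G.tgt e ∉ A ∧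
    ((G.src e ∈ P ∩ Q ∧ G.tgt e ∉ P ∩ Q ∧ G.tgt e ≠ x i) ∨
     (G.tgt e ∈ P ∩ Q ∧ G.src e ∉ P ∩ Q ∧ G.src e ≠ x i))} with hS1
  set S2 : Set E := {e : E | G.src e ∉ A ∧ G.tgt e ∉ A ∧
    ((G.src e ∈ P ∪ Q ∧ G.tgt e ∉ P ∪ Q ∧ G.tgt e ≠ x j) ∨
     (G.tgt e ∈ P ∪ Q ∧ G.src e ∉ P ∪ Q ∧ G.src e ≠ x j))} with hS2
  set T1 : Set E := {e : E | G.src e ∉ A ∧ G.tgt e ∉ A ∧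
    ((G.src e ∈ P ∧ G.tgt e ∉ P ∧ G.tgt e ≠ x i) ∨
     (G.tgt e ∈ P ∧ G.src e ∉ P ∧ G.src e ≠ x i))} with hT1
  set T2 : Set E := {e : E | G.src e ∉ A ∧ G.tgt e ∉ A ∧
    ((G.src e ∈ Q ∧ G.tgt e ∉ Q ∧ G.tgt e ≠ x j) ∨
     (G.tgt e ∈ Q ∧ G.src e ∉ Q ∧ G.src e ≠ x j))} with hT2
  have hI : S1 ∩ S2 ⊆ T1 ∩ T2 := by
    rintro e ⟨⟨ha1, ha2, hc1⟩, ⟨_, _, hc2⟩⟩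
    obtain ⟨hp, hq⟩ := cut_key_inter hbP haQ hc1 hc2
    exact ⟨⟨ha1, ha2, hp⟩, ⟨ha1, ha2, hq⟩⟩
  have hU : S1 ∪ S2 ⊆ T1 ∪ T2 := by
    rintro e (⟨ha1, ha2, hc⟩ | ⟨ha1, ha2, hc⟩)
    · exact (cut_key_union hbP haQ (Or.inl hc)).imp (fun h => ⟨ha1, ha2, h⟩)
        (fun h => ⟨ha1, ha2, h⟩)
    · exact (cut_key_union hbP haQ (Or.inr hc)).imp (fun h => ⟨ha1, ha2, h⟩)
        (fun h => ⟨ha1, ha2, h⟩)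
  show S1.ncard + S2.ncard ≤ T1.ncard + T2.ncard
  calc S1.ncard + S2.ncard
      = (S1 ∪ S2).ncard + (S1 ∩ S2).ncard :=
        (Set.ncard_union_add_ncard_inter S1 S2 (Set.toFinite _) (Set.toFinite _)).symm
    _ ≤ (T1 ∪ T2).ncard + (T1 ∩ T2).ncard :=
        add_le_add (Set.ncard_le_ncard hU (Set.toFinite _))
          (Set.ncard_le_ncard hI (Set.toFinite _))
    _ = T1.ncard + T2.ncard :=
        Set.ncard_union_add_ncard_inter T1 T2 (Set.toFinite _) (Set.toFinite _)

end AuxSubmod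

/-- minimal separators are strictly nested: `L_i ⊊ L_j` for `i < j`. -/
theorem minimal_separators_nested {V E : Type*} [Fintype V] [Fintype E]
    (G : Multigraph V E) (A : Set V) (x : ℕ → V) (t : ℕ)
    (hinj : Set.InjOn x (Set.Icc 1 t)) (hxA : ∀ j ∈ Set.Icc 1 t, x j ∉ A)
    (L : ℕ → Set V)
    (hL : ∀ i, 2 ≤ i → i ≤ t - 1 →
      Multigraph.ISep G A x t i (L i) ∧
      ∀ Z, Multigraph.ISep G A x t i Z →
        Multigraph.sepCount G A x i (L i) ≤ Multigraph.sepCount G A x i Z ∧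
        (Multigraph.sepCount G A x i Z ≤ Multigraph.sepCount G A x i (L i) →
          (L i).ncard ≤ Z.ncard)) :
    ∀ i j, 2 ≤ i → i < j → j ≤ t - 1 → L i ⊂ L j := by
  intro i j hi hij hj
  have hit : i ≤ t - 1 := le_of_lt (lt_of_lt_of_le hij hj)
  obtain ⟨hPsep, hPmin⟩ := hL i hi hit
  obtain ⟨hQsep, hQmin⟩ := hL j (by omega) hj
  set P := L i with hP
  set Q := L j with hQ
  have hbP : x j ∉ P := hPsep.2.2.2 j hij (le_trans hj (Nat.sub_le t 1))
  have haQ : x i ∈ Q := hQsep.2.2.1 i (by omega) hij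
  have hInterSep : Multigraph.ISep G A x t i (P ∩ Q) :=
    ⟨fun v hv => hPsep.1 v hv.1, fun h => hPsep.2.1 h.1,
     fun k h1 hk => ⟨hPsep.2.2.1 k h1 hk, hQsep.2.2.1 k h1 (lt_trans hk hij)⟩,
     fun k hk hkt h => hPsep.2.2.2 k hk hkt h.1⟩
  have hUnionSep : Multigraph.ISep G A x t j (P ∪ Q) :=
    ⟨fun v hv => hv.elim (hPsep.1 v) (hQsep.1 v),
     fun h => h.elim hbP hQsep.2.1,
     fun k h1 hk => Or.inr (hQsep.2.2.1 k h1 hk),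
     fun k hk hkt h => h.elim (hPsep.2.2.2 k (lt_trans hij hk) hkt)
       (hQsep.2.2.2 k hk hkt)⟩
  have hsubmod := sepCount_submod G A x i j P Q hbP haQ
  obtain ⟨h1a, h1b⟩ := hPmin (P ∩ Q) hInterSep
  obtain ⟨h2a, _⟩ := hQmin (P ∪ Q) hUnionSep
  have hC : Multigraph.sepCount G A x i (P ∩ Q) ≤ Multigraph.sepCount G A x i P := by
    omega
  have hcard : P.ncard ≤ (P ∩ Q).ncard := h1b hC
  have heq : P ∩ Q = P :=
    Set.eq_of_subset_of_ncard_le Set.inter_subset_left hcard (Set.toFinite _)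
  have hsubPQ : P ⊆ Q := Set.inter_eq_left.mp heq
  exact hsubPQ.ssubset_of_ne (fun h => hPsep.2.1 (h ▸ haQ))
end

section
/- Let f be a submodularity identity for the separator counts: with the setup of minimal i-separators L_i and L_j (i < j), setting N_i = L_i ∩ L_j and N_j = L_i ∪ L_j, one has s_i(L_i) + s_j(L_j) ≥ s_i(N_i) + s_j(N_j), where N_i is an i-separator and N_j is a j-separator. -/
open scoped Classical

set_option maxHeartbeats 2000000 in
/-- submodularity exchange: `N_i = L_i ∩ L_j` is an `i`-separator,
`N_j = L_i ∪ L_j` is a `j`-separator, and `s_i(N_i) + s_j(N_j) ≤ s_i(L_i) + s_j(L_j)`. -/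
theorem separator_submodular_exchange {V E : Type*} [Fintype V] [Fintype E]
    (G : Multigraph V E) (A : Set V) (x : ℕ → V) (t : ℕ)
    (hinj : Set.InjOn x (Set.Icc 1 t)) (hxA : ∀ j ∈ Set.Icc 1 t, x j ∉ A)
    (i j : ℕ) (h2i : 2 ≤ i) (hij : i < j) (hjt : j ≤ t - 1)
    (Li Lj : Set V)
    (hLi : Multigraph.ISep G A x t i Li) (hLj : Multigraph.ISep G A x t j Lj) :
    Multigraph.ISep G A x t i (Li ∩ Lj) ∧ Multigraph.ISep G A x t j (Li ∪ Lj) ∧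
      Multigraph.sepCount G A x i (Li ∩ Lj) + Multigraph.sepCount G A x j (Li ∪ Lj) ≤
        Multigraph.sepCount G A x i Li + Multigraph.sepCount G A x j Lj := by
  obtain ⟨hAi, hxiLi, hltLi, hgtLi⟩ := hLi
  obtain ⟨hAj, hxjLj, hltLj, hgtLj⟩ := hLj
  have h1i : 1 ≤ i := le_trans (by norm_num) h2i
  have hjt' : j ≤ t := le_trans hjt (Nat.sub_le t 1)
  have hit : i ≤ t := le_of_lt (lt_of_lt_of_le hij hjt')
  have hxiLj : x i ∈ Lj := hltLj i h1i hij
  have hxjLi : x j ∉ Li := hgtLi j hij hjt'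
  refine ⟨⟨fun v hv => hAi v hv.1, fun h => hxiLi h.1,
      fun k hk1 hki => ⟨hltLi k hk1 hki, hltLj k hk1 (lt_trans hki hij)⟩,
      fun k hki hkt h => hgtLi k hki hkt h.1⟩,
    ⟨fun v hv => hv.elim (hAi v) (hAj v),
      fun h => h.elim hxjLi hxjLj,
      fun k hk1 hkj => Or.inr (hltLj k hk1 hkj),
      fun k hkj hkt h => h.elim (hgtLi k (lt_trans hij hkj) hkt) (hgtLj k hkj hkt)⟩, ?_⟩
  set Pset : ℕ → Set V → Set E := fun k Z =>
    {e : E | G.src e ∉ A ∧ G.tgt e ∉ A ∧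
      ((G.src e ∈ Z ∧ G.tgt e ∉ Z ∧ G.tgt e ≠ x k) ∨
       (G.tgt e ∈ Z ∧ G.src e ∉ Z ∧ G.src e ≠ x k))} with hPset
  have hrfl : ∀ (k : ℕ) (Z : Set V), Multigraph.sepCount G A x k Z = (Pset k Z).ncard :=
    fun k Z => rfl
  have hsub1 : Pset i (Li ∩ Lj) ∪ Pset j (Li ∪ Lj) ⊆ Pset i Li ∪ Pset j Lj := by
    intro e he
    have hsi : G.src e = x i → G.src e ∉ Li ∧ G.src e ∈ Lj := fun h => h ▸ ⟨hxiLi, hxiLj⟩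
    have hsj : G.src e = x j → G.src e ∉ Li ∧ G.src e ∉ Lj := fun h => h ▸ ⟨hxjLi, hxjLj⟩
    have hti : G.tgt e = x i → G.tgt e ∉ Li ∧ G.tgt e ∈ Lj := fun h => h ▸ ⟨hxiLi, hxiLj⟩
    have htj : G.tgt e = x j → G.tgt e ∉ Li ∧ G.tgt e ∉ Lj := fun h => h ▸ ⟨hxjLi, hxjLj⟩
    simp only [hPset, Set.mem_union, Set.mem_setOf_eq, Set.mem_inter_iff] at he ⊢
    tauto
  have hsub2 : Pset i (Li ∩ Lj) ∩ Pset j (Li ∪ Lj) ⊆ Pset i Li ∩ Pset j Lj := by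
    intro e he
    have hsi : G.src e = x i → G.src e ∉ Li ∧ G.src e ∈ Lj := fun h => h ▸ ⟨hxiLi, hxiLj⟩
    have hsj : G.src e = x j → G.src e ∉ Li ∧ G.src e ∉ Lj := fun h => h ▸ ⟨hxjLi, hxjLj⟩
    have hti : G.tgt e = x i → G.tgt e ∉ Li ∧ G.tgt e ∈ Lj := fun h => h ▸ ⟨hxiLi, hxiLj⟩
    have htj : G.tgt e = x j → G.tgt e ∉ Li ∧ G.tgt e ∉ Lj := fun h => h ▸ ⟨hxjLi, hxjLj⟩
    simp only [hPset, Set.mem_inter_iff, Set.mem_setOf_eq, Set.mem_union] at he ⊢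
    tauto
  calc Multigraph.sepCount G A x i (Li ∩ Lj) + Multigraph.sepCount G A x j (Li ∪ Lj)
      = (Pset i (Li ∩ Lj)).ncard + (Pset j (Li ∪ Lj)).ncard := by rw [hrfl, hrfl]
    _ = (Pset i (Li ∩ Lj) ∪ Pset j (Li ∪ Lj)).ncard
        + (Pset i (Li ∩ Lj) ∩ Pset j (Li ∪ Lj)).ncard :=
        (Set.ncard_union_add_ncard_inter _ _).symm
    _ ≤ (Pset i Li ∪ Pset j Lj).ncard + (Pset i Li ∩ Pset j Lj).ncard :=
        add_le_add (Set.ncard_le_ncard hsub1 (Set.toFinite _))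
          (Set.ncard_le_ncard hsub2 (Set.toFinite _))
    _ = (Pset i Li).ncard + (Pset j Lj).ncard := Set.ncard_union_add_ncard_inter _ _
    _ = Multigraph.sepCount G A x i Li + Multigraph.sepCount G A x j Lj := by rw [hrfl, hrfl]
end
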